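/- arXiv:1911.00917 — 2 statements merged into one kernel-verified Lean document; each statement's English description precedes it below -/
import Mathlib

section
/- Let 0 ≤ γ < δ < α ≤ n and let f ∈ L¹_loc(ℝⁿ) be nonnegative. Then for all x ∈ ℝⁿ, I_δ f(x) ≤ C [M_α f(x)]^{(δ−γ)/(α−γ)} [M_γ f(x)]^{1−(δ−γ)/(α−γ)}, where C depends only on n, α, β, γ. -/
open MeasureTheory Metric Set ENNReal
noncomputable section

/-- Euclidean space ℝⁿ. -/
abbrev En (n : ℕ) := EuclideanSpace ℝ (Fin n)

/-- Riesz potential of order `δ` of a nonnegative function (Lebesgue measure). -/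
def rieszPot (n : ℕ) (δ : ℝ) (f : En n → ℝ≥0∞) (x : En n) : ℝ≥0∞ :=
  ∫⁻ y, ENNReal.ofReal (‖x - y‖ ^ (δ - (n : ℝ))) * f y

/-- Riesz potential of a real-valued function (Bochner integral, Lebesgue measure). -/
def rieszR (n : ℕ) (δ : ℝ) (f : En n → ℝ) (x : En n) : ℝ :=
  ∫ y, ‖x - y‖ ^ (δ - (n : ℝ)) * f y

/-- Fractional maximal function of order `s` (Lebesgue measure). -/
def fracMax (n : ℕ) (s : ℝ) (f : En n → ℝ≥0∞) (x : En n) : ℝ≥0∞ :=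
  ⨆ (r : ℝ) (_ : 0 < r), ENNReal.ofReal (r ^ (s - (n : ℝ))) * ∫⁻ y in ball x r, f y

/-- `x` lies in the support of the measure `μ`. -/
def memSupport {n : ℕ} (μ : Measure (En n)) (x : En n) : Prop :=
  ∀ r : ℝ, 0 < r → 0 < μ (ball x r)

/-- The growth constant `⟦μ⟧_β = sup_{x ∈ spt μ, r>0} r^{-β} μ(B(x,r))`. -/
def growthConst (n : ℕ) (β : ℝ) (μ : Measure (En n)) : ℝ≥0∞ :=
  ⨆ (x : En n) (_ : memSupport μ x) (r : ℝ) (_ : 0 < r),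
    ENNReal.ofReal (r ^ (-β)) * μ (ball x r)

/-- Distribution function of `f` with respect to `μ`. -/
def distFn {α : Type*} [MeasurableSpace α] (μ : Measure α) (f : α → ℝ≥0∞) (s : ℝ≥0∞) : ℝ≥0∞ :=
  μ {x | s < f x}

/-- Decreasing rearrangement of `f` with respect to `μ`. -/
def rearr {α : Type*} [MeasurableSpace α] (μ : Measure α) (f : α → ℝ≥0∞) (t : ℝ≥0∞) : ℝ≥0∞ :=
  sInf {s : ℝ≥0∞ | distFn μ f s ≤ t}

/-- Lorentz quasinorm `‖f‖_{L^{p,k}(μ)}`, with the usual sup modification for `k = ∞`. -/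
def lorentzNorm {α : Type*} [MeasurableSpace α] (μ : Measure α) (p : ℝ) (k : ℝ≥0∞)
    (f : α → ℝ≥0∞) : ℝ≥0∞ :=
  if k = ∞ then
    ⨆ (t : ℝ) (_ : 0 < t ∧ ENNReal.ofReal t < μ Set.univ),
      ENNReal.ofReal (t ^ (1 / p)) * rearr μ f (ENNReal.ofReal t)
  else
    (ENNReal.ofReal (k.toReal / p) *
      ∫⁻ t in {t : ℝ | 0 < t ∧ ENNReal.ofReal t < μ Set.univ},
        (ENNReal.ofReal (t ^ (1 / p)) * rearr μ f (ENNReal.ofReal t)) ^ k.toReal /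
          ENNReal.ofReal t) ^ (1 / k.toReal)

/-- Lorentz quasinorm of a real-valued function. -/
def lorentzNormR {α : Type*} [MeasurableSpace α] (μ : Measure α) (p : ℝ) (k : ℝ≥0∞)
    (f : α → ℝ) : ℝ≥0∞ :=
  lorentzNorm μ p k (fun x => (‖f x‖₊ : ℝ≥0∞))

/-- Morrey–Lorentz norm `‖f‖_{M^λ_{p,l}}` with Hausdorff-dimension parameter `β`. -/
def mlNorm {n : ℕ} (μ : Measure (En n)) (β p lam : ℝ) (l : ℝ≥0∞) (f : En n → ℝ≥0∞) : ℝ≥0∞ :=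
  ⨆ (x : En n) (_ : memSupport μ x) (R : ℝ) (_ : 0 < R),
    ENNReal.ofReal (R ^ (-(β * (1 / p - 1 / lam)))) *
      lorentzNorm (μ.restrict (ball x R)) p l f

/-- Morrey–Lorentz norm of a real-valued function. -/
def mlNormR {n : ℕ} (μ : Measure (En n)) (β p lam : ℝ) (l : ℝ≥0∞) (f : En n → ℝ) : ℝ≥0∞ :=
  mlNorm μ β p lam l (fun x => (‖f x‖₊ : ℝ≥0∞))

/-- Centered sharp maximal function of `g` with respect to `μ` and exponent `β`. -/
def sharpMaxC (n : ℕ) (β : ℝ) (μ : Measure (En n)) (g : En n → ℝ) (x₀ : En n) : ℝ≥0∞ :=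
  ⨆ (r : ℝ) (_ : 0 < r),
    ENNReal.ofReal (r ^ (-β)) *
      ∫⁻ x in ball x₀ r,
        ENNReal.ofReal |g x - (μ (ball x₀ r)).toReal⁻¹ * ∫ y in ball x₀ r, g y ∂μ| ∂μ

/-- The cube with center `c` and half side-length `h`. -/
def cube {n : ℕ} (c : En n) (h : ℝ) : Set (En n) := {y | ∀ i, |y i - c i| ≤ h}

/-- Uncentered sharp maximal function (sup over cubes containing `x`) w.r.t. `μ`. -/
def sharpMaxU {n : ℕ} (μ : Measure (En n)) (g : En n → ℝ) (x : En n) : ℝ≥0∞ :=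
  ⨆ (c : En n) (h : ℝ) (_ : 0 < h) (_ : x ∈ cube c h),
    (μ (cube c h))⁻¹ *
      ∫⁻ y in cube c h,
        ENNReal.ofReal |g y - (μ (cube c h)).toReal⁻¹ * ∫ z in cube c h, g z ∂μ| ∂μ

/-- Fourier transform of a measure: `μ̂(ξ) = ∫ e^{-2πi x·ξ} dμ(x)`. -/
def fourierMeasure (n : ℕ) (μ : Measure (En n)) (ξ : En n) : ℂ :=
  ∫ x, Complex.exp (-2 * Real.pi * Complex.I * ((inner ℝ x ξ : ℝ) : ℂ)) ∂μ

/-- Partial derivative in the `i`-th coordinate direction. -/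
def pderivE {n : ℕ} (i : Fin n) (f : En n → ℝ) : En n → ℝ :=
  fun x => fderiv ℝ f x (EuclideanSpace.single i 1)

/-- Iterated partial derivative `D^α` given as a list of coordinate directions. -/
def pdList {n : ℕ} : List (Fin n) → (En n → ℝ) → (En n → ℝ)
  | [], f => f
  | i :: L, f => pderivE i (pdList L f)

/-- Anisotropic scaling of the last coordinate by the factor `c`. -/
def lastScale {n : ℕ} (c : ℝ) (x : En (n + 1)) : En (n + 1) :=
  (WithLp.equiv 2 (Fin (n + 1) → ℝ)).symm
    (fun i => if i = Fin.last n then c * x i else x i)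

/-- The open upper half-space `ℝⁿ₊` in `ℝ^{n+1}`. -/
def halfSpace (n : ℕ) : Set (En (n + 1)) := {x | 0 < x (Fin.last n)}

/-- The Calderón–Stein extension operator on the half-space. -/
def csExt {n : ℕ} (ψ : ℝ → ℝ) (f : En (n + 1) → ℝ) (x : En (n + 1)) : ℝ :=
  if 0 ≤ x (Fin.last n) then f x
  else ∫ s in Set.Ioi (1 : ℝ), f (lastScale (1 - 2 * s) x) * ψ s

/-- Embedding of the boundary `ℝⁿ = ∂ℝ^{n+1}₊` into `ℝ^{n+1}`, appending a `0`. -/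
def bdEmbed {n : ℕ} (x' : En n) : En (n + 1) :=
  (WithLp.equiv 2 (Fin (n + 1) → ℝ)).symm (Fin.snoc (fun j => x' j) 0)

/-- The maximal rearrangement `f♮(t) = t⁻¹ ∫₀ᵗ f*(s) ds`. -/
def natRearr {α : Type*} [MeasurableSpace α] (μ : Measure α) (f : α → ℝ≥0∞) (t : ℝ) : ℝ≥0∞ :=
  (ENNReal.ofReal t)⁻¹ * ∫⁻ s in Set.Ioc (0 : ℝ) t, rearr μ f (ENNReal.ofReal s)

/-- Lorentz norm built from the maximal rearrangement `f♮`. -/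
def lorentzNormNat {α : Type*} [MeasurableSpace α] (μ : Measure α) (p : ℝ) (k : ℝ≥0∞)
    (f : α → ℝ≥0∞) : ℝ≥0∞ :=
  if k = ∞ then
    ⨆ (t : ℝ) (_ : 0 < t ∧ ENNReal.ofReal t < μ Set.univ),
      ENNReal.ofReal (t ^ (1 / p)) * natRearr μ f t
  else
    (ENNReal.ofReal (k.toReal / p) *
      ∫⁻ t in {t : ℝ | 0 < t ∧ ENNReal.ofReal t < μ Set.univ},
        (ENNReal.ofReal (t ^ (1 / p)) * natRearr μ f t) ^ k.toReal /
          ENNReal.ofReal t) ^ (1 / k.toReal)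
section RieszHelpers

lemma lint_Ioc_rpow {p R : ℝ} (hp : -1 < p) (hR : 0 < R) :
    ∫⁻ r in Set.Ioc (0:ℝ) R, ENNReal.ofReal (r ^ p) =
      ENNReal.ofReal (R ^ (p + 1) / (p + 1)) := by
  have hint : MeasureTheory.IntegrableOn (fun r : ℝ => r ^ p) (Set.Ioc 0 R) := by
    rw [← intervalIntegrable_iff_integrableOn_Ioc_of_le hR.le]
    exact intervalIntegral.intervalIntegrable_rpow' hp
  rw [← MeasureTheory.ofReal_integral_eq_lintegral_ofReal hint ?_]
  · congr 1
    rw [← intervalIntegral.integral_of_le hR.le, integral_rpow (Or.inl hp),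
      Real.zero_rpow (by linarith : p + 1 ≠ 0)]
    ring
  · filter_upwards [MeasureTheory.ae_restrict_mem measurableSet_Ioc] with r hr
    exact Real.rpow_nonneg hr.1.le p

lemma lint_Ioi_rpow {p R : ℝ} (hp : p < -1) (hR : 0 < R) :
    ∫⁻ r in Set.Ioi R, ENNReal.ofReal (r ^ p) =
      ENNReal.ofReal (-R ^ (p + 1) / (p + 1)) := by
  rw [← MeasureTheory.ofReal_integral_eq_lintegral_ofReal
      (integrableOn_Ioi_rpow_of_lt hp hR) ?_]
  · rw [integral_Ioi_rpow_of_lt hp hR]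
  · filter_upwards [MeasureTheory.ae_restrict_mem measurableSet_Ioi] with r hr
    exact Real.rpow_nonneg (hR.trans hr).le p

lemma ofReal_rpow_le_lint {q a : ℝ} (hq : q < 0) (ha : 0 ≤ a) :
    ENNReal.ofReal (a ^ q) ≤
      ENNReal.ofReal (-q) * ∫⁻ r in Set.Ioi a, ENNReal.ofReal (r ^ (q - 1)) := by
  rcases eq_or_lt_of_le ha with h0 | hpos
  · rw [← h0, Real.zero_rpow hq.ne]
    simp
  · rw [lint_Ioi_rpow (by linarith) hpos, ← ENNReal.ofReal_mul (by linarith)]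
    apply le_of_eq
    congr 1
    have h1 : q - 1 + 1 = q := by ring
    rw [h1]
    field_simp
    exact (div_self hq.ne).symm

lemma ball_le_fracMax (n : ℕ) (s : ℝ) (f : En n → ℝ≥0∞) (x : En n) {r : ℝ} (hr : 0 < r) :
    ∫⁻ y in ball x r, f y ≤ ENNReal.ofReal (r ^ ((n:ℝ) - s)) * fracMax n s f x := by
  have h1 : ENNReal.ofReal (r ^ (s - (n:ℝ))) * ∫⁻ y in ball x r, f y ≤ fracMax n s f x :=
    le_iSup₂ (f := fun (r : ℝ) (_ : 0 < r) =>
      ENNReal.ofReal (r ^ (s - (n:ℝ))) * ∫⁻ y in ball x r, f y) r hr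
  calc ∫⁻ y in ball x r, f y
      = ENNReal.ofReal (r ^ ((n:ℝ) - s)) *
        (ENNReal.ofReal (r ^ (s - (n:ℝ))) * ∫⁻ y in ball x r, f y) := by
        rw [← mul_assoc, ← ENNReal.ofReal_mul (Real.rpow_nonneg hr.le _),
          ← Real.rpow_add hr]
        have h0 : (n:ℝ) - s + (s - (n:ℝ)) = 0 := by ring
        rw [h0, Real.rpow_zero, ENNReal.ofReal_one, one_mul]
    _ ≤ _ := mul_le_mul_right h1 _

lemma ball_int_zero (n : ℕ) (s : ℝ) (f : En n → ℝ≥0∞) (x : En n)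
    (h : fracMax n s f x = 0) : ∀ r : ℝ, 0 < r → ∫⁻ y in ball x r, f y = 0 := by
  intro r hr
  have h1 : ENNReal.ofReal (r ^ (s - (n:ℝ))) * ∫⁻ y in ball x r, f y ≤ fracMax n s f x :=
    le_iSup₂ (f := fun (r : ℝ) (_ : 0 < r) =>
      ENNReal.ofReal (r ^ (s - (n:ℝ))) * ∫⁻ y in ball x r, f y) r hr
  rw [h, le_zero_iff, mul_eq_zero] at h1
  rcases h1 with h1 | h1
  · exact absurd h1 (ENNReal.ofReal_pos.mpr (Real.rpow_pos_of_pos hr _)).ne'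
  · exact h1

lemma rieszPot_le_layer (n : ℕ) (δ : ℝ) (hδ : δ < n) (f : En n → ℝ≥0∞) (hf : Measurable f)
    (x : En n) :
    rieszPot n δ f x ≤ ENNReal.ofReal ((n:ℝ) - δ) *
      ∫⁻ r in Set.Ioi (0:ℝ),
        ENNReal.ofReal (r ^ (δ - (n:ℝ) - 1)) * ∫⁻ y in ball x r, f y := by
  have hc : δ - (n:ℝ) < 0 := by linarith
  set c : ℝ := δ - (n:ℝ) - 1 with hcdef
  set S : Set (En n × ℝ) := {q : En n × ℝ | ‖x - q.1‖ < q.2} with hSdef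
  have hSmeas : MeasurableSet S :=
    (isOpen_lt (Continuous.norm (continuous_const.sub continuous_fst)) continuous_snd).measurableSet
  set F : En n × ℝ → ℝ≥0∞ :=
    Set.indicator S (fun q => ENNReal.ofReal (q.2 ^ c) * f q.1) with hFdef
  have hFmeas : Measurable F := by
    apply Measurable.indicator _ hSmeas
    exact (ENNReal.measurable_ofReal.comp (measurable_snd.pow_const c)).mul
      (hf.comp measurable_fst)
  have step1 : rieszPot n δ f x ≤
      ∫⁻ y, (ENNReal.ofReal ((n:ℝ) - δ) *
        ∫⁻ r in Set.Ioi ‖x - y‖, ENNReal.ofReal (r ^ c)) * f y := by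
    refine lintegral_mono fun y => mul_le_mul_left ?_ (f y)
    have := ofReal_rpow_le_lint (q := δ - (n:ℝ)) hc (norm_nonneg (x - y))
    rwa [show -(δ - (n:ℝ)) = (n:ℝ) - δ by ring] at this
  have step2 : ∀ y : En n,
      (∫⁻ r in Set.Ioi ‖x - y‖, ENNReal.ofReal (r ^ c)) * f y =
        ∫⁻ r in Set.Ioi (0:ℝ), F (y, r) := by
    intro y
    have hmr : Measurable fun r : ℝ => ENNReal.ofReal (r ^ c) :=
      (measurable_id'.pow_const c).ennreal_ofReal
    rw [← lintegral_mul_const (f y) hmr]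
    have hIoi : Set.Ioi ‖x - y‖ ∩ Set.Ioi (0:ℝ) = Set.Ioi ‖x - y‖ := by
      rw [Set.Ioi_inter_Ioi, sup_eq_left.mpr (norm_nonneg (x - y))]
    calc ∫⁻ r in Set.Ioi ‖x - y‖, ENNReal.ofReal (r ^ c) * f y
        = ∫⁻ r in Set.Ioi (0:ℝ),
            (Set.Ioi ‖x - y‖).indicator (fun r => ENNReal.ofReal (r ^ c) * f y) r := by
          rw [lintegral_indicator measurableSet_Ioi,
            Measure.restrict_restrict measurableSet_Ioi, hIoi]
      _ = ∫⁻ r in Set.Ioi (0:ℝ), F (y, r) := by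
          refine lintegral_congr fun r => ?_
          simp only [hFdef, hSdef, Set.indicator_apply, Set.mem_Ioi, Set.mem_setOf_eq]
  have step3 :
      ∫⁻ y, ∫⁻ r in Set.Ioi (0:ℝ), F (y, r) =
        ∫⁻ r in Set.Ioi (0:ℝ), ∫⁻ y, F (y, r) :=
    lintegral_lintegral_swap hFmeas.aemeasurable
  have step4 : ∀ r : ℝ,
      ∫⁻ y, F (y, r) = ENNReal.ofReal (r ^ c) * ∫⁻ y in ball x r, f y := by
    intro r
    have : ∀ y : En n, F (y, r) =
        (ball x r).indicator (fun y => ENNReal.ofReal (r ^ c) * f y) y := by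
      intro y
      have hiff : y ∈ ball x r ↔ ‖x - y‖ < r := by
        rw [mem_ball, dist_eq_norm, norm_sub_rev]
      simp only [hFdef, hSdef, Set.indicator_apply, Set.mem_setOf_eq]
      by_cases h : ‖x - y‖ < r
      · rw [if_pos h, Set.indicator_of_mem (hiff.mpr h)]
      · rw [if_neg h, Set.indicator_of_notMem (fun hy => h (hiff.mp hy))]
    simp_rw [this]
    rw [lintegral_indicator measurableSet_ball, lintegral_const_mul _ hf]
  calc rieszPot n δ f x
      ≤ ∫⁻ y, (ENNReal.ofReal ((n:ℝ) - δ) *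
          ∫⁻ r in Set.Ioi ‖x - y‖, ENNReal.ofReal (r ^ c)) * f y := step1
    _ = ENNReal.ofReal ((n:ℝ) - δ) * ∫⁻ y, ∫⁻ r in Set.Ioi (0:ℝ), F (y, r) := by
        simp_rw [mul_assoc, step2]
        rw [lintegral_const_mul _
          (Measurable.lintegral_prod_right' (ν := volume.restrict (Set.Ioi (0:ℝ))) hFmeas)]
    _ = ENNReal.ofReal ((n:ℝ) - δ) * ∫⁻ r in Set.Ioi (0:ℝ), ∫⁻ y, F (y, r) := by rw [step3]
    _ = _ := by simp_rw [step4]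

lemma rieszPot_key (n : ℕ) (γ δ α : ℝ) (hγδ : γ < δ) (hδα : δ < α) (hαn : α ≤ (n:ℝ))
    (f : En n → ℝ≥0∞) (hf : Measurable f) (x : En n) {R : ℝ} (hR : 0 < R) :
    rieszPot n δ f x ≤
      ENNReal.ofReal (((n:ℝ) - δ) / (δ - γ)) * ENNReal.ofReal (R ^ (δ - γ)) * fracMax n γ f x +
        ENNReal.ofReal (((n:ℝ) - δ) / (α - δ)) * ENNReal.ofReal (R ^ (δ - α)) *
          fracMax n α f x := by
  have hδn : δ < (n:ℝ) := lt_of_lt_of_le hδα hαn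
  refine (rieszPot_le_layer n δ hδn f hf x).trans ?_
  have hsplit : (∫⁻ r in Set.Ioi (0:ℝ),
        ENNReal.ofReal (r ^ (δ - (n:ℝ) - 1)) * ∫⁻ y in ball x r, f y)
      = (∫⁻ r in Set.Ioc (0:ℝ) R,
          ENNReal.ofReal (r ^ (δ - (n:ℝ) - 1)) * ∫⁻ y in ball x r, f y)
        + ∫⁻ r in Set.Ioi R,
            ENNReal.ofReal (r ^ (δ - (n:ℝ) - 1)) * ∫⁻ y in ball x r, f y := by
    rw [← Set.Ioc_union_Ioi_eq_Ioi hR.le,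
      lintegral_union measurableSet_Ioi (Set.Ioc_disjoint_Ioi le_rfl)]
  rw [hsplit, mul_add]
  refine add_le_add ?_ ?_
  · -- near part, exponent γ
    have h1 : (∫⁻ r in Set.Ioc (0:ℝ) R,
          ENNReal.ofReal (r ^ (δ - (n:ℝ) - 1)) * ∫⁻ y in ball x r, f y)
        ≤ ∫⁻ r in Set.Ioc (0:ℝ) R,
            ENNReal.ofReal (r ^ (δ - γ - 1)) * fracMax n γ f x := by
      refine setLIntegral_mono
        (((measurable_id'.pow_const _).ennreal_ofReal).mul_const _) fun r hr => ?_
      calc ENNReal.ofReal (r ^ (δ - (n:ℝ) - 1)) * ∫⁻ y in ball x r, f y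
          ≤ ENNReal.ofReal (r ^ (δ - (n:ℝ) - 1)) *
              (ENNReal.ofReal (r ^ ((n:ℝ) - γ)) * fracMax n γ f x) :=
            mul_le_mul_right (ball_le_fracMax n γ f x hr.1) _
        _ = ENNReal.ofReal (r ^ (δ - γ - 1)) * fracMax n γ f x := by
            rw [← mul_assoc, ← ENNReal.ofReal_mul (Real.rpow_nonneg ?_ _),
              ← Real.rpow_add hr.1]
            · congr 3
              ring
            · exact le_of_lt hr.1
    have h2 : (∫⁻ r in Set.Ioc (0:ℝ) R,
          ENNReal.ofReal (r ^ (δ - γ - 1)) * fracMax n γ f x)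
        = ENNReal.ofReal (R ^ (δ - γ) / (δ - γ)) * fracMax n γ f x := by
      rw [lintegral_mul_const _ ((measurable_id'.pow_const _).ennreal_ofReal),
        lint_Ioc_rpow (by linarith) hR]
      norm_num
    calc ENNReal.ofReal ((n:ℝ) - δ) * ∫⁻ r in Set.Ioc (0:ℝ) R,
          ENNReal.ofReal (r ^ (δ - (n:ℝ) - 1)) * ∫⁻ y in ball x r, f y
        ≤ ENNReal.ofReal ((n:ℝ) - δ) *
            (ENNReal.ofReal (R ^ (δ - γ) / (δ - γ)) * fracMax n γ f x) :=
          mul_le_mul_right (h1.trans h2.le) _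
      _ = ENNReal.ofReal (((n:ℝ) - δ) / (δ - γ)) * ENNReal.ofReal (R ^ (δ - γ)) *
            fracMax n γ f x := by
          rw [← mul_assoc, ← ENNReal.ofReal_mul (by linarith : (0:ℝ) ≤ (n:ℝ) - δ),
            ← ENNReal.ofReal_mul (div_nonneg (by linarith) (by linarith))]
          congr 2
          field_simp
  · -- far part, exponent α
    have h1 : (∫⁻ r in Set.Ioi R,
          ENNReal.ofReal (r ^ (δ - (n:ℝ) - 1)) * ∫⁻ y in ball x r, f y)
        ≤ ∫⁻ r in Set.Ioi R,
            ENNReal.ofReal (r ^ (δ - α - 1)) * fracMax n α f x := by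
      refine setLIntegral_mono
        (((measurable_id'.pow_const _).ennreal_ofReal).mul_const _) fun r hr => ?_
      have hr0 : (0:ℝ) < r := hR.trans hr
      calc ENNReal.ofReal (r ^ (δ - (n:ℝ) - 1)) * ∫⁻ y in ball x r, f y
          ≤ ENNReal.ofReal (r ^ (δ - (n:ℝ) - 1)) *
              (ENNReal.ofReal (r ^ ((n:ℝ) - α)) * fracMax n α f x) :=
            mul_le_mul_right (ball_le_fracMax n α f x hr0) _
        _ = ENNReal.ofReal (r ^ (δ - α - 1)) * fracMax n α f x := by
            rw [← mul_assoc, ← ENNReal.ofReal_mul (Real.rpow_nonneg hr0.le _),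
              ← Real.rpow_add hr0]
            congr 3
            ring
    have h2 : (∫⁻ r in Set.Ioi R,
          ENNReal.ofReal (r ^ (δ - α - 1)) * fracMax n α f x)
        = ENNReal.ofReal (-R ^ (δ - α) / (δ - α)) * fracMax n α f x := by
      rw [lintegral_mul_const _ ((measurable_id'.pow_const _).ennreal_ofReal),
        lint_Ioi_rpow (by linarith) hR]
      norm_num
    calc ENNReal.ofReal ((n:ℝ) - δ) * ∫⁻ r in Set.Ioi R,
          ENNReal.ofReal (r ^ (δ - (n:ℝ) - 1)) * ∫⁻ y in ball x r, f y
        ≤ ENNReal.ofReal ((n:ℝ) - δ) *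
            (ENNReal.ofReal (-R ^ (δ - α) / (δ - α)) * fracMax n α f x) :=
          mul_le_mul_right (h1.trans h2.le) _
      _ = ENNReal.ofReal (((n:ℝ) - δ) / (α - δ)) * ENNReal.ofReal (R ^ (δ - α)) *
            fracMax n α f x := by
          rw [← mul_assoc, ← ENNReal.ofReal_mul (by linarith : (0:ℝ) ≤ (n:ℝ) - δ),
            ← ENNReal.ofReal_mul (div_nonneg (by linarith) (by linarith))]
          congr 2
          have hαδ : α - δ ≠ 0 := by linarith
          have key : -R ^ (δ - α) / (δ - α) = R ^ (δ - α) / (α - δ) := by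
            rw [show δ - α = -(α - δ) by ring, div_neg, neg_div, neg_neg]
          rw [key]
          ring

end RieszHelpers

/-- pointwise interpolation bound of the Riesz potential by
fractional maximal functions. -/
theorem rieszPot_le_fracMax_interpolation (n : ℕ) (γ δ α : ℝ) (hγ0 : 0 ≤ γ) (hγδ : γ < δ)
    (hδα : δ < α) (hαn : α ≤ n) :
    ∃ C : ℝ, 0 < C ∧ ∀ (f : En n → ℝ≥0∞), Measurable f → ∀ x : En n,
      rieszPot n δ f x ≤
        ENNReal.ofReal C * (fracMax n α f x) ^ ((δ - γ) / (α - γ)) *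
          (fracMax n γ f x) ^ (1 - (δ - γ) / (α - γ)) := by
  have hδn : δ < (n:ℝ) := lt_of_lt_of_le hδα hαn
  have hαγ : (0:ℝ) < α - γ := by linarith
  set p : ℝ := (δ - γ) / (α - γ) with hpdef
  have hp0 : 0 < p := div_pos (by linarith) hαγ
  have hp1 : p < 1 := (div_lt_one hαγ).mpr (by linarith)
  have hq0 : 0 < 1 - p := by linarith
  set C : ℝ := ((n:ℝ) - δ) / (δ - γ) + ((n:ℝ) - δ) / (α - δ) with hCdef
  have hc1 : (0:ℝ) ≤ ((n:ℝ) - δ) / (δ - γ) := div_nonneg (by linarith) (by linarith)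
  have hc2 : (0:ℝ) ≤ ((n:ℝ) - δ) / (α - δ) := div_nonneg (by linarith) (by linarith)
  have hC : 0 < C := by
    have h1 := div_pos (by linarith : (0:ℝ) < (n:ℝ) - δ) (by linarith : (0:ℝ) < δ - γ)
    have h2 := div_pos (by linarith : (0:ℝ) < (n:ℝ) - δ) (by linarith : (0:ℝ) < α - δ)
    rw [hCdef]; linarith
  have hCne : ENNReal.ofReal C ≠ 0 := (ENNReal.ofReal_pos.mpr hC).ne'
  refine ⟨C, hC, fun f hf x => ?_⟩
  set A := fracMax n α f x with hAdef
  set G := fracMax n γ f x with hGdef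
  by_cases hG0 : G = 0
  · -- the maximal function vanishes, hence `f = 0` a.e. and the potential vanishes
    have hball : ∀ r : ℝ, 0 < r → ∫⁻ y in ball x r, f y = 0 := ball_int_zero n γ f x hG0
    have hint : ∫⁻ y, f y = 0 := by
      refine le_antisymm ?_ zero_le
      calc ∫⁻ y, f y = ∫⁻ y in Set.univ, f y := (setLIntegral_univ f).symm
        _ = ∫⁻ y in ⋃ k : ℕ, ball x ((k:ℝ) + 1), f y := by rw [iUnion_ball_nat_succ]
        _ ≤ ∑' k : ℕ, ∫⁻ y in ball x ((k:ℝ) + 1), f y := lintegral_iUnion_le _ _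
        _ = 0 := by
            simp only [fun k : ℕ => hball ((k:ℝ) + 1) (by positivity)]
            exact tsum_zero
    have hae : f =ᵐ[volume] 0 := (lintegral_eq_zero_iff hf).mp hint
    have hzero : rieszPot n δ f x = 0 := by
      rw [rieszPot, ← lintegral_zero]
      refine lintegral_congr_ae ?_
      filter_upwards [hae] with y hy
      simp [hy]
    rw [hzero]
    exact zero_le
  have hA0 : A ≠ 0 := by
    intro h0
    apply hG0
    have hball := ball_int_zero n α f x h0
    refine le_antisymm ?_ zero_le
    rw [hGdef, fracMax]
    refine iSup₂_le fun r hr => ?_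
    rw [hball r hr, mul_zero]
  by_cases hAtop : A = ⊤
  · have hGq : G ^ (1 - p) ≠ 0 := by
      simp only [ne_eq, ENNReal.rpow_eq_zero_iff, not_or, not_and_or]
      exact ⟨Or.inl hG0, Or.inr (by linarith)⟩
    rw [hAtop, ENNReal.top_rpow_of_pos hp0, ENNReal.mul_top hCne, ENNReal.top_mul hGq]
    exact le_top
  by_cases hGtop : G = ⊤
  · have hAp : A ^ p ≠ 0 := by
      simp only [ne_eq, ENNReal.rpow_eq_zero_iff, not_or, not_and_or]
      exact ⟨Or.inl hA0, Or.inr (by linarith)⟩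
    rw [hGtop, ENNReal.top_rpow_of_pos hq0, ENNReal.mul_top (mul_ne_zero hCne hAp)]
    exact le_top
  -- main case: both maximal functions are finite and positive
  set a : ℝ := A.toReal with hadef
  set g : ℝ := G.toReal with hgdef
  have hApos : 0 < a := ENNReal.toReal_pos hA0 hAtop
  have hGpos : 0 < g := ENNReal.toReal_pos hG0 hGtop
  have hdiv : (0:ℝ) < a / g := div_pos hApos hGpos
  have hAe : A = ENNReal.ofReal a := (ENNReal.ofReal_toReal hAtop).symm
  have hGe : G = ENNReal.ofReal g := (ENNReal.ofReal_toReal hGtop).symm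
  set R : ℝ := (a / g) ^ (1 / (α - γ)) with hRdef
  have hRpos : 0 < R := Real.rpow_pos_of_pos hdiv _
  refine (rieszPot_key n γ δ α hγδ hδα hαn f hf x hRpos).trans ?_
  have hpm : p - 1 = (δ - α) / (α - γ) := by
    rw [hpdef, div_sub_one hαγ.ne']
    congr 1
    ring
  have hR1 : R ^ (δ - γ) = (a / g) ^ p := by
    rw [hRdef, ← Real.rpow_mul hdiv.le]
    congr 1
    rw [hpdef, div_mul_eq_mul_div, one_mul]
  have hR2 : R ^ (δ - α) = (a / g) ^ (p - 1) := by
    rw [hRdef, ← Real.rpow_mul hdiv.le]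
    congr 1
    rw [hpm, one_div, inv_mul_eq_div]
  have hgp : (0:ℝ) < g ^ p := Real.rpow_pos_of_pos hGpos _
  have hval1 : (a / g) ^ p * g = a ^ p * g ^ (1 - p) := by
    rw [Real.div_rpow hApos.le hGpos.le, Real.rpow_sub hGpos, Real.rpow_one]
    field_simp
  have hval2 : (a / g) ^ (p - 1) * a = a ^ p * g ^ (1 - p) := by
    have hstep : (a / g) ^ (p - 1) * a = (a / g) ^ p * g := by
      rw [Real.rpow_sub hdiv, Real.rpow_one]
      field_simp
    rw [hstep]
    exact hval1
  have t1 : ENNReal.ofReal (((n:ℝ) - δ) / (δ - γ)) * ENNReal.ofReal (R ^ (δ - γ)) * G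
      = ENNReal.ofReal (((n:ℝ) - δ) / (δ - γ) * (a ^ p * g ^ (1 - p))) := by
    rw [hGe, hR1, ← ENNReal.ofReal_mul hc1,
      ← ENNReal.ofReal_mul (mul_nonneg hc1 (Real.rpow_nonneg hdiv.le _)),
      mul_assoc, hval1]
  have t2 : ENNReal.ofReal (((n:ℝ) - δ) / (α - δ)) * ENNReal.ofReal (R ^ (δ - α)) * A
      = ENNReal.ofReal (((n:ℝ) - δ) / (α - δ) * (a ^ p * g ^ (1 - p))) := by
    rw [hAe, hR2, ← ENNReal.ofReal_mul hc2,
      ← ENNReal.ofReal_mul (mul_nonneg hc2 (Real.rpow_nonneg hdiv.le _)),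
      mul_assoc, hval2]
  have t3 : ENNReal.ofReal C * A ^ p * G ^ (1 - p)
      = ENNReal.ofReal (C * (a ^ p * g ^ (1 - p))) := by
    rw [hAe, hGe, ENNReal.ofReal_rpow_of_pos hApos, ENNReal.ofReal_rpow_of_pos hGpos,
      ← ENNReal.ofReal_mul hC.le,
      ← ENNReal.ofReal_mul (mul_nonneg hC.le (Real.rpow_nonneg hApos.le _)), mul_assoc]
  apply le_of_eq
  rw [t1, t2, t3, ← ENNReal.ofReal_add (by positivity) (by positivity)]
  congr 1
  rw [hCdef]
  ring
end
end

section
/- Let μ be a Radon measure on ℝⁿ with ⟦μ⟧_β = sup_{x∈spt(μ), r>0} r^{−β} μ(B(x,r)) < ∞, where n − α < β ≤ n and 0 < α < n. If f ∈ L¹_loc(ℝⁿ, Lebesgue) and I_α f ∈ L¹_loc(μ), then the centered sharp maximal function satisfies the pointwise bound M̄^♯ I_α f(x) ≤ C ⟦μ⟧_β M_α f(x) for all x ∈ spt(μ). -/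
open MeasureTheory Metric Set ENNReal
noncomputable section

/-! ### Auxiliary lemmas for Statement 6 -/

section Aux

open Filter

lemma null_of_no_support {n : ℕ} (μ : Measure (En n)) (U : Set (En n))
    (h : ∀ z ∈ U, ¬ memSupport μ z) : μ U = 0 := by
  classical
  have h' : ∀ z : U, ∃ rz : ℝ, 0 < rz ∧ μ (ball (z : En n) rz) = 0 := by
    intro z
    obtain ⟨r, hr, hz⟩ := by simpa [memSupport, not_forall, le_zero_iff, not_lt] using h z z.2
    exact ⟨r, hr, by simpa [le_zero_iff] using hz⟩
  choose rz hrz hz using h'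
  obtain ⟨T, hTc, hT⟩ := TopologicalSpace.isOpen_iUnion_countable
    (fun z : U => ball (z : En n) (rz z)) (fun z => isOpen_ball)
  have hUsub : U ⊆ ⋃ z ∈ T, ball (z : En n) (rz z) := by
    rw [hT]
    intro x hx
    exact mem_iUnion.2 ⟨⟨x, hx⟩, mem_ball_self (hrz _)⟩
  refine le_antisymm ?_ zero_le
  calc μ U ≤ μ (⋃ z ∈ T, ball (z : En n) (rz z)) := measure_mono hUsub
  _ = 0 := measure_biUnion_null_iff hTc |>.2 fun z _ => hz z

lemma ball_bound_support {n : ℕ} {β : ℝ} {μ : Measure (En n)} {x : En n}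
    (hx : memSupport μ x) {s : ℝ} (hs : 0 < s) :
    μ (ball x s) ≤ growthConst n β μ * ENNReal.ofReal (s ^ β) := by
  have h1 : ENNReal.ofReal (s ^ (-β)) * μ (ball x s) ≤ growthConst n β μ := by
    refine le_trans ?_ (le_iSup _ x)
    refine le_trans ?_ (le_iSup _ hx)
    refine le_trans ?_ (le_iSup _ s)
    exact le_iSup_of_le hs le_rfl
  have hmul : ENNReal.ofReal (s ^ β) * ENNReal.ofReal (s ^ (-β)) = 1 := by
    rw [← ENNReal.ofReal_mul (Real.rpow_nonneg hs.le _), ← Real.rpow_add hs]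
    simp
  calc μ (ball x s) = ENNReal.ofReal (s ^ β) * (ENNReal.ofReal (s ^ (-β)) * μ (ball x s)) := by
        rw [← mul_assoc, hmul, one_mul]
  _ ≤ ENNReal.ofReal (s ^ β) * growthConst n β μ := by exact mul_le_mul_right h1 _
  _ = _ := mul_comm _ _

lemma ball_bound_general {n : ℕ} {β : ℝ} {μ : Measure (En n)} (y : En n)
    {s : ℝ} (hs : 0 < s) :
    μ (ball y s) ≤ growthConst n β μ * ENNReal.ofReal ((2 * s) ^ β) := by
  by_cases h : ∃ z ∈ ball y s, memSupport μ z
  · obtain ⟨z, hz, hzs⟩ := h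
    have hsub : ball y s ⊆ ball z (2 * s) := fun w hw => by
      have := dist_triangle w y z
      have h1 : dist w y < s := hw
      have h2 : dist y z < s := by rwa [dist_comm, ← mem_ball]
      simp only [mem_ball] at *; linarith
    exact (measure_mono hsub).trans (ball_bound_support hzs (by linarith))
  · push_neg at h
    rw [null_of_no_support μ _ h]
    exact zero_le

lemma fracMax_ball_bound {n : ℕ} {α : ℝ} (F : En n → ℝ≥0∞) (x : En n) {s : ℝ} (hs : 0 < s) :
    ∫⁻ y in ball x s, F y ≤ fracMax n α F x * ENNReal.ofReal (s ^ ((n:ℝ) - α)) := by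
  have h1 : ENNReal.ofReal (s ^ (α - (n:ℝ))) * ∫⁻ y in ball x s, F y ≤ fracMax n α F x := by
    refine le_trans ?_ (le_iSup _ s)
    exact le_iSup_of_le hs le_rfl
  have hmul : ENNReal.ofReal (s ^ ((n:ℝ) - α)) * ENNReal.ofReal (s ^ (α - (n:ℝ))) = 1 := by
    rw [← ENNReal.ofReal_mul (Real.rpow_nonneg hs.le _), ← Real.rpow_add hs]
    simp
  calc (∫⁻ y in ball x s, F y)
      = ENNReal.ofReal (s ^ ((n:ℝ) - α)) *
        (ENNReal.ofReal (s ^ (α - (n:ℝ))) * ∫⁻ y in ball x s, F y) := by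
        rw [← mul_assoc, hmul, one_mul]
  _ ≤ ENNReal.ofReal (s ^ ((n:ℝ) - α)) * fracMax n α F x := mul_le_mul_right h1 _
  _ = _ := mul_comm _ _

lemma exists_dyadic_Ioc {R d : ℝ} (h0 : 0 < d) (hd : d ≤ R) :
    ∃ j : ℕ, d ∈ Ioc (R / 2 ^ (j + 1)) (R / 2 ^ j) := by
  have hR : 0 < R := lt_of_lt_of_le h0 hd
  have hex : ∃ j : ℕ, R / 2 ^ (j + 1) < d := by
    obtain ⟨j, hj⟩ := pow_unbounded_of_one_lt (R / d) (one_lt_two (α := ℝ))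
    have hRd : R < d * 2 ^ j := by
      have := (div_lt_iff₀ h0).1 hj; linarith
    refine ⟨j, (div_lt_iff₀ (by positivity)).2 ?_⟩
    have : (2:ℝ) ^ (j + 1) = 2 * 2 ^ j := by ring
    nlinarith [pow_pos (two_pos (α := ℝ)) j]
  classical
  refine ⟨Nat.find hex, Nat.find_spec hex, ?_⟩
  cases hN : Nat.find hex with
  | zero => simpa using hd
  | succ m =>
    have hmin := Nat.find_min hex (m := m) (by omega)
    push_neg at hmin
    exact hmin

lemma exists_dyadic_Ico {r d : ℝ} (hr : 0 < r) (hd : 2 * r ≤ d) :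
    ∃ k : ℕ, d ∈ Ico (2 ^ (k + 1) * r) (2 ^ (k + 2) * r) := by
  have hex : ∃ k : ℕ, d < 2 ^ (k + 2) * r := by
    obtain ⟨k, hk⟩ := pow_unbounded_of_one_lt (d / r) (one_lt_two (α := ℝ))
    have : d < 2 ^ k * r := by have := (div_lt_iff₀ hr).1 hk; linarith
    refine ⟨k, lt_of_lt_of_le this ?_⟩
    have : (2:ℝ) ^ k ≤ 2 ^ (k + 2) := by
      apply pow_le_pow_right₀ (by norm_num); omega
    nlinarith
  classical
  refine ⟨Nat.find hex, ?_, Nat.find_spec hex⟩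
  cases hN : Nat.find hex with
  | zero => simpa using hd
  | succ m =>
    have hmin := Nat.find_min hex (m := m) (by omega)
    push_neg at hmin
    exact hmin

lemma rpow_div_pow (j : ℕ) {c r : ℝ} (hc : 0 < c) (hr : 0 < r) (e : ℝ) :
    (c * r / 2 ^ j) ^ e = c ^ e * r ^ e * ((2:ℝ) ^ (-e)) ^ j := by
  have h2 : (0:ℝ) < 2 ^ j := by positivity
  rw [Real.div_rpow (by positivity) (by positivity), Real.mul_rpow hc.le hr.le]
  rw [← Real.rpow_natCast (2:ℝ) j, ← Real.rpow_mul (by norm_num),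
    ← Real.rpow_natCast ((2:ℝ) ^ (-e)) j, ← Real.rpow_mul (by norm_num)]
  rw [div_eq_mul_inv, ← Real.rpow_neg (by norm_num)]
  ring_nf

lemma pow_mul_rpow (k : ℕ) {r : ℝ} (hr : 0 < r) (e : ℝ) :
    (2 ^ k * r) ^ e = r ^ e * ((2:ℝ) ^ e) ^ k := by
  rw [Real.mul_rpow (by positivity) hr.le, ← Real.rpow_natCast (2:ℝ) k,
    ← Real.rpow_mul (by norm_num), ← Real.rpow_natCast ((2:ℝ) ^ e) k,
    ← Real.rpow_mul (by norm_num), mul_comm ((k:ℝ)) e, mul_comm]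

def CK3 (n : ℕ) (α β : ℝ) : ℝ≥0∞ :=
  ENNReal.ofReal ((3/2:ℝ) ^ (α - (n:ℝ)) * 12 ^ β) *
    (1 - ENNReal.ofReal ((2:ℝ) ^ (-(β + (α - (n:ℝ))))))⁻¹

lemma q_lt_one {c : ℝ} (hc : 0 < c) : ENNReal.ofReal ((2:ℝ) ^ (-c)) < 1 := by
  rw [show (1:ℝ≥0∞) = ENNReal.ofReal 1 by simp]
  exact (ENNReal.ofReal_lt_ofReal_iff one_pos).2
    (Real.rpow_lt_one_of_one_lt_of_neg one_lt_two (by linarith))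

lemma CK3_ne_top {n : ℕ} {α β : ℝ} (hβγ : 0 < β + (α - (n:ℝ))) : CK3 n α β ≠ ∞ := by
  apply ENNReal.mul_ne_top ENNReal.ofReal_ne_top
  rw [ENNReal.inv_ne_top]
  have := q_lt_one hβγ
  simp only [ne_eq, tsub_eq_zero_iff_le, not_le]
  exact this

lemma kernel_mu_integral {n : ℕ} {α β : ℝ} (hγ : α - (n:ℝ) < 0) (hβγ : 0 < β + (α - (n:ℝ)))
    (hβ : 0 < β) {μ : Measure (En n)} {x₀ : En n} {r : ℝ} (hr : 0 < r)
    (y : En n) (hy : y ∈ ball x₀ (2*r)) :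
    ∫⁻ x in ball x₀ r, ENNReal.ofReal (‖x - y‖ ^ (α - (n:ℝ))) ∂μ ≤
      CK3 n α β * growthConst n β μ * ENNReal.ofReal (r ^ (β + (α - (n:ℝ)))) := by
  set γ := α - (n:ℝ) with hγdef
  set G := growthConst n β μ with hG
  set S : ℕ → Set (En n) := fun j =>
    ball x₀ r ∩ {x | ‖x - y‖ ∈ Ioc (3*r / 2 ^ (j+1)) (3*r / 2 ^ j)} with hS
  have cover : ball x₀ r ⊆ {y} ∪ ⋃ j, S j := by
    intro x hx
    by_cases hxy : x = y
    · exact Or.inl (by simp [hxy])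
    · have h0 : 0 < ‖x - y‖ := by
        rw [norm_pos_iff]; exact sub_ne_zero.2 hxy
      have hle : ‖x - y‖ ≤ 3 * r := by
        have h1 : dist x x₀ < r := mem_ball.1 hx
        have h2 : dist y x₀ < 2 * r := mem_ball.1 hy
        have := dist_triangle x x₀ y
        rw [dist_comm y x₀] at h2
        rw [show ‖x - y‖ = dist x y from (dist_eq_norm x y).symm]
        linarith
      obtain ⟨j, hj⟩ := exists_dyadic_Ioc h0 hle
      exact Or.inr (mem_iUnion.2 ⟨j, hx, hj⟩)
  have key : ∀ j : ℕ, ∫⁻ x in S j, ENNReal.ofReal (‖x - y‖ ^ γ) ∂μ ≤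
      (ENNReal.ofReal ((3/2:ℝ) ^ γ * 12 ^ β) * G * ENNReal.ofReal (r ^ (β + γ))) *
        (ENNReal.ofReal ((2:ℝ) ^ (-(β + γ)))) ^ j := by
    intro j
    have hb : ∀ x ∈ S j, ENNReal.ofReal (‖x - y‖ ^ γ) ≤
        ENNReal.ofReal ((3*r / 2 ^ (j+1)) ^ γ) := by
      intro x hx
      obtain ⟨-, hx2, -⟩ := hx
      exact ENNReal.ofReal_le_ofReal
        (Real.rpow_le_rpow_of_nonpos (by positivity) hx2.le hγ.le)
    calc ∫⁻ x in S j, ENNReal.ofReal (‖x - y‖ ^ γ) ∂μ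
        ≤ ∫⁻ _ in S j, ENNReal.ofReal ((3*r / 2 ^ (j+1)) ^ γ) ∂μ :=
          setLIntegral_mono measurable_const hb
      _ = ENNReal.ofReal ((3*r / 2 ^ (j+1)) ^ γ) * μ (S j) := setLIntegral_const _ _
      _ ≤ ENNReal.ofReal ((3*r / 2 ^ (j+1)) ^ γ) *
            (G * ENNReal.ofReal ((2 * (2 * (3*r / 2 ^ j))) ^ β)) := by
          gcongr
          refine le_trans (measure_mono ?_) (ball_bound_general y (by positivity))
          intro x hx
          obtain ⟨-, -, hx3⟩ := hx
          rw [mem_ball, dist_eq_norm]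
          calc ‖x - y‖ ≤ 3*r / 2 ^ j := hx3
          _ < 2 * (3*r / 2 ^ j) := by
              nlinarith [div_pos (by linarith : (0:ℝ) < 3*r) (pow_pos two_pos j)]
      _ = (ENNReal.ofReal ((3/2:ℝ) ^ γ * 12 ^ β) * G * ENNReal.ofReal (r ^ (β + γ))) *
            (ENNReal.ofReal ((2:ℝ) ^ (-(β + γ)))) ^ j := by
          have e1 : 3*r / 2 ^ (j+1) = (3/2) * r / 2 ^ j := by
            rw [pow_succ]; ring
          have e2 : (2 * (2 * (3*r / 2 ^ j))) = 12 * r / 2 ^ j := by ring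
          rw [e1, e2, rpow_div_pow j (by norm_num : (0:ℝ) < 3/2) hr γ,
            rpow_div_pow j (by norm_num : (0:ℝ) < 12) hr β]
          have e3 : r ^ γ * r ^ β = r ^ (β + γ) := by
            rw [← Real.rpow_add hr]; ring_nf
          have e4 : ((2:ℝ) ^ (-γ)) ^ j * ((2:ℝ) ^ (-β)) ^ j = (((2:ℝ) ^ (-(β+γ))) ^ j) := by
            rw [← mul_pow, ← Real.rpow_add two_pos]; ring_nf
          have ereal : ((3/2:ℝ) ^ γ * r ^ γ * ((2:ℝ)^(-γ))^j) * (12 ^ β * r ^ β * ((2:ℝ)^(-β))^j)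
              = ((3/2:ℝ) ^ γ * 12 ^ β) * (r ^ (β+γ)) * (((2:ℝ)^(-(β+γ)))^j) := by
            calc ((3/2:ℝ) ^ γ * r ^ γ * ((2:ℝ)^(-γ))^j) * (12 ^ β * r ^ β * ((2:ℝ)^(-β))^j)
                = ((3/2:ℝ) ^ γ * 12 ^ β) * (r ^ γ * r ^ β) *
                  (((2:ℝ)^(-γ))^j * ((2:ℝ)^(-β))^j) := by ring
              _ = _ := by rw [e3, e4]
          have o1 : ENNReal.ofReal (((3/2:ℝ) ^ γ * r ^ γ * ((2:ℝ)^(-γ))^j) *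
              (12 ^ β * r ^ β * ((2:ℝ)^(-β))^j)) =
              ENNReal.ofReal ((3/2:ℝ) ^ γ * r ^ γ * ((2:ℝ)^(-γ))^j) *
              ENNReal.ofReal (12 ^ β * r ^ β * ((2:ℝ)^(-β))^j) :=
            ENNReal.ofReal_mul (by positivity)
          have o2 : ENNReal.ofReal (((3/2:ℝ) ^ γ * 12 ^ β) * (r ^ (β+γ)) *
              (((2:ℝ)^(-(β+γ)))^j)) =
              ENNReal.ofReal ((3/2:ℝ) ^ γ * 12 ^ β) * ENNReal.ofReal (r ^ (β+γ)) *
              ENNReal.ofReal ((((2:ℝ)^(-(β+γ)))^j)) := by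
            rw [ENNReal.ofReal_mul (by positivity), ENNReal.ofReal_mul (by positivity)]
          have o3 : ENNReal.ofReal ((((2:ℝ)^(-(β+γ)))^j)) =
              (ENNReal.ofReal ((2:ℝ)^(-(β+γ))))^j := ENNReal.ofReal_pow (by positivity) j
          rw [mul_comm G (ENNReal.ofReal (12 ^ β * r ^ β * ((2:ℝ)^(-β))^j)), ← mul_assoc,
            ← o1, ereal, o2, o3]
          ring
  calc ∫⁻ x in ball x₀ r, ENNReal.ofReal (‖x - y‖ ^ γ) ∂μ
      ≤ ∫⁻ x in {y} ∪ ⋃ j, S j, ENNReal.ofReal (‖x - y‖ ^ γ) ∂μ := lintegral_mono_set cover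
    _ ≤ (∫⁻ x in {y}, ENNReal.ofReal (‖x - y‖ ^ γ) ∂μ) +
          ∫⁻ x in ⋃ j, S j, ENNReal.ofReal (‖x - y‖ ^ γ) ∂μ := lintegral_union_le _ _ _
    _ ≤ 0 + ∑' j, ∫⁻ x in S j, ENNReal.ofReal (‖x - y‖ ^ γ) ∂μ := by
        gcongr
        · rw [lintegral_singleton]
          simp [Real.zero_rpow (ne_of_lt hγ)]
        · exact lintegral_iUnion_le _ _
    _ ≤ 0 + ∑' j, (ENNReal.ofReal ((3/2:ℝ) ^ γ * 12 ^ β) * G * ENNReal.ofReal (r ^ (β + γ))) *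
          (ENNReal.ofReal ((2:ℝ) ^ (-(β + γ)))) ^ j := by gcongr with j; exact key j
    _ = (ENNReal.ofReal ((3/2:ℝ) ^ γ * 12 ^ β) * G * ENNReal.ofReal (r ^ (β + γ))) *
          (1 - ENNReal.ofReal ((2:ℝ) ^ (-(β + γ))))⁻¹ := by
        rw [zero_add, ENNReal.tsum_mul_left, ENNReal.tsum_geometric]
    _ = CK3 n α β * G * ENNReal.ofReal (r ^ (β + γ)) := by
        rw [CK3]; ring

def CT5 (n : ℕ) (α : ℝ) : ℝ≥0∞ :=
  ENNReal.ofReal ((2:ℝ) ^ (α - (n:ℝ) - 1) * (4:ℝ) ^ ((n:ℝ) - α)) * 2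

lemma tail_sum {n : ℕ} {α : ℝ} (hγ0 : α - (n:ℝ) < 0) {x₀ : En n} {r : ℝ} (hr : 0 < r)
    (F : En n → ℝ≥0∞) :
    ∫⁻ y in (ball x₀ (2*r))ᶜ, ENNReal.ofReal (‖x₀ - y‖ ^ (α - (n:ℝ) - 1)) * F y ∂volume ≤
      CT5 n α * fracMax n α F x₀ * ENNReal.ofReal (r ^ (-1:ℝ)) := by
  set γ := α - (n:ℝ) with hγdef
  set M := fracMax n α F x₀ with hM
  set A : ℕ → Set (En n) := fun k =>
    {y | ‖x₀ - y‖ ∈ Ico (2 ^ (k+1) * r) (2 ^ (k+2) * r)} with hA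
  have cover : (ball x₀ (2*r))ᶜ ⊆ ⋃ k, A k := by
    intro y hy
    have hd : 2 * r ≤ ‖x₀ - y‖ := by
      have : ¬ dist y x₀ < 2 * r := fun h => hy (mem_ball.2 h)
      rw [dist_comm, dist_eq_norm] at this
      linarith [not_lt.1 this]
    obtain ⟨k, hk⟩ := exists_dyadic_Ico hr hd
    exact mem_iUnion.2 ⟨k, hk⟩
  have hAmeas : ∀ k, MeasurableSet (A k) := by
    intro k
    exact (measurable_const.sub (measurable_id)).norm measurableSet_Ico
  have hhalf : ENNReal.ofReal ((2:ℝ)⁻¹) = 2⁻¹ := by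
    rw [ENNReal.ofReal_inv_of_pos two_pos]; norm_num
  have key : ∀ k : ℕ, ∫⁻ y in A k, ENNReal.ofReal (‖x₀ - y‖ ^ (γ - 1)) * F y ∂volume ≤
      (ENNReal.ofReal ((2:ℝ) ^ (γ - 1) * (4:ℝ) ^ ((n:ℝ) - α)) * M *
        ENNReal.ofReal (r ^ (-1:ℝ))) * (2⁻¹ : ℝ≥0∞) ^ k := by
    intro k
    have hb : ∀ y ∈ A k, ENNReal.ofReal (‖x₀ - y‖ ^ (γ - 1)) * F y ≤
        ENNReal.ofReal ((2 ^ (k+1) * r) ^ (γ - 1)) * F y := by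
      intro y hy
      apply mul_le_mul_left
      apply ENNReal.ofReal_le_ofReal
      refine Real.rpow_le_rpow_of_nonpos (by positivity) hy.1 ?_
      rw [hγdef]; linarith
    have hsub : A k ⊆ ball x₀ (2 ^ (k+2) * r) := by
      intro y hy
      rw [mem_ball, dist_eq_norm, norm_sub_rev]
      exact hy.2
    have hspos : (0:ℝ) < 2 ^ (k+2) * r := by positivity
    calc ∫⁻ y in A k, ENNReal.ofReal (‖x₀ - y‖ ^ (γ - 1)) * F y ∂volume
        ≤ ∫⁻ y in A k, ENNReal.ofReal ((2 ^ (k+1) * r) ^ (γ - 1)) * F y ∂volume :=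
          setLIntegral_mono' (hAmeas k) hb
      _ = ENNReal.ofReal ((2 ^ (k+1) * r) ^ (γ - 1)) * ∫⁻ y in A k, F y ∂volume :=
          lintegral_const_mul' _ _ ENNReal.ofReal_ne_top
      _ ≤ ENNReal.ofReal ((2 ^ (k+1) * r) ^ (γ - 1)) *
            (M * ENNReal.ofReal ((2 ^ (k+2) * r) ^ ((n:ℝ) - α))) := by
          gcongr
          exact le_trans (lintegral_mono_set hsub) (fracMax_ball_bound F x₀ hspos)
      _ = _ := by
          have h2r : (0:ℝ) < 2*r := by linarith
          have h4r : (0:ℝ) < 4*r := by linarith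
          have e1 : ((2:ℝ) ^ (k+1) * r) = 2 ^ k * (2*r) := by ring
          have e2 : ((2:ℝ) ^ (k+2) * r) = 2 ^ k * (4*r) := by ring
          rw [e1, e2, pow_mul_rpow k h2r, pow_mul_rpow k h4r]
          have e3 : (2*r:ℝ) ^ (γ-1) = 2 ^ (γ-1) * r ^ (γ-1) := Real.mul_rpow (by norm_num) hr.le
          have e4 : (4*r:ℝ) ^ ((n:ℝ)-α) = 4 ^ ((n:ℝ)-α) * r ^ ((n:ℝ)-α) :=
            Real.mul_rpow (by norm_num) hr.le
          have e5 : (r:ℝ) ^ (γ-1) * r ^ ((n:ℝ)-α) = r ^ (-1:ℝ) := by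
            rw [← Real.rpow_add hr]; congr 1; rw [hγdef]; ring
          have e6 : ((2:ℝ) ^ (γ-1)) ^ k * ((2:ℝ) ^ ((n:ℝ)-α)) ^ k = ((2:ℝ)⁻¹) ^ k := by
            rw [← mul_pow, ← Real.rpow_add two_pos,
              show (γ-1) + ((n:ℝ)-α) = -1 by rw [hγdef]; ring, Real.rpow_neg_one]
          have ereal : ((2*r:ℝ) ^ (γ-1) * ((2:ℝ) ^ (γ-1)) ^ k) *
              ((4*r:ℝ) ^ ((n:ℝ)-α) * ((2:ℝ) ^ ((n:ℝ)-α)) ^ k) =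
              ((2:ℝ) ^ (γ-1) * (4:ℝ) ^ ((n:ℝ)-α)) * r ^ (-1:ℝ) * ((2:ℝ)⁻¹) ^ k := by
            calc ((2*r:ℝ) ^ (γ-1) * ((2:ℝ) ^ (γ-1)) ^ k) *
                ((4*r:ℝ) ^ ((n:ℝ)-α) * ((2:ℝ) ^ ((n:ℝ)-α)) ^ k)
                = ((2:ℝ) ^ (γ-1) * (4:ℝ) ^ ((n:ℝ)-α)) * ((r:ℝ) ^ (γ-1) * r ^ ((n:ℝ)-α)) *
                  (((2:ℝ) ^ (γ-1)) ^ k * ((2:ℝ) ^ ((n:ℝ)-α)) ^ k) := by rw [e3, e4]; ring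
              _ = _ := by rw [e5, e6]
          have o1 : ENNReal.ofReal (((2*r:ℝ) ^ (γ-1) * ((2:ℝ) ^ (γ-1)) ^ k) *
              ((4*r:ℝ) ^ ((n:ℝ)-α) * ((2:ℝ) ^ ((n:ℝ)-α)) ^ k)) =
              ENNReal.ofReal ((2*r:ℝ) ^ (γ-1) * ((2:ℝ) ^ (γ-1)) ^ k) *
              ENNReal.ofReal ((4*r:ℝ) ^ ((n:ℝ)-α) * ((2:ℝ) ^ ((n:ℝ)-α)) ^ k) :=
            ENNReal.ofReal_mul (by positivity)
          have o2 : ENNReal.ofReal (((2:ℝ) ^ (γ-1) * (4:ℝ) ^ ((n:ℝ)-α)) * r ^ (-1:ℝ) *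
              ((2:ℝ)⁻¹) ^ k) = ENNReal.ofReal ((2:ℝ) ^ (γ-1) * (4:ℝ) ^ ((n:ℝ)-α)) *
              ENNReal.ofReal (r ^ (-1:ℝ)) * ENNReal.ofReal (((2:ℝ)⁻¹) ^ k) := by
            rw [ENNReal.ofReal_mul (by positivity), ENNReal.ofReal_mul (by positivity)]
          have o3 : ENNReal.ofReal (((2:ℝ)⁻¹) ^ k) = (2⁻¹ : ℝ≥0∞) ^ k := by
            rw [ENNReal.ofReal_pow (by positivity), hhalf]
          rw [mul_comm M (ENNReal.ofReal ((4*r:ℝ) ^ ((n:ℝ)-α) * ((2:ℝ) ^ ((n:ℝ)-α)) ^ k)),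
            ← mul_assoc, ← o1, ereal, o2, o3]
          ring
  calc ∫⁻ y in (ball x₀ (2*r))ᶜ, ENNReal.ofReal (‖x₀ - y‖ ^ (γ - 1)) * F y ∂volume
      ≤ ∫⁻ y in ⋃ k, A k, ENNReal.ofReal (‖x₀ - y‖ ^ (γ - 1)) * F y ∂volume :=
        lintegral_mono_set cover
    _ ≤ ∑' k, ∫⁻ y in A k, ENNReal.ofReal (‖x₀ - y‖ ^ (γ - 1)) * F y ∂volume :=
        lintegral_iUnion_le _ _
    _ ≤ ∑' k, (ENNReal.ofReal ((2:ℝ) ^ (γ - 1) * (4:ℝ) ^ ((n:ℝ) - α)) * M *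
          ENNReal.ofReal (r ^ (-1:ℝ))) * (2⁻¹ : ℝ≥0∞) ^ k := by
        gcongr with k; exact key k
    _ = (ENNReal.ofReal ((2:ℝ) ^ (γ - 1) * (4:ℝ) ^ ((n:ℝ) - α)) * M *
          ENNReal.ofReal (r ^ (-1:ℝ))) * (1 - 2⁻¹)⁻¹ := by
        rw [ENNReal.tsum_mul_left, ENNReal.tsum_geometric]
    _ = CT5 n α * M * ENNReal.ofReal (r ^ (-1:ℝ)) := by
        rw [ENNReal.one_sub_inv_two, inv_inv, CT5, hγdef]; ring

lemma kernel_diff {γ : ℝ} (hγ : γ < 0) {m a b : ℝ} (hm : 0 < m) (ha : m ≤ a) (hb : m ≤ b) :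
    |a ^ γ - b ^ γ| ≤ (-γ) * m ^ (γ - 1) * |a - b| := by
  have key := Convex.norm_image_sub_le_of_norm_hasDerivWithin_le
    (f := fun t : ℝ => t ^ γ) (f' := fun t : ℝ => γ * t ^ (γ - 1))
    (s := Ici m) (C := (-γ) * m ^ (γ - 1)) ?_ ?_ (convex_Ici m) hb ha
  · simpa [Real.norm_eq_abs, abs_sub_comm] using key
  · intro t ht
    have htpos : 0 < t := lt_of_lt_of_le hm ht
    exact (Real.hasDerivAt_rpow_const (Or.inl htpos.ne')).hasDerivWithinAt
  · intro t ht
    have htpos : 0 < t := lt_of_lt_of_le hm ht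
    rw [Real.norm_eq_abs, abs_mul, abs_of_neg hγ,
      abs_of_nonneg (Real.rpow_nonneg htpos.le _)]
    have h2 := Real.rpow_le_rpow_of_nonpos hm ht (show γ - 1 ≤ 0 by linarith)
    nlinarith

lemma half_bound {E : Type*} [NormedAddCommGroup E] {x x₀ y : E} {r : ℝ}
    (hx : ‖x - x₀‖ < r) (hy : 2 * r ≤ ‖x₀ - y‖) : ‖x₀ - y‖ / 2 ≤ ‖x - y‖ := by
  have h1 : ‖x₀ - y‖ ≤ ‖x₀ - x‖ + ‖x - y‖ := by
    simpa using norm_sub_le_norm_sub_add_norm_sub x₀ x y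
  have h2 : ‖x₀ - x‖ = ‖x - x₀‖ := norm_sub_rev _ _
  linarith

lemma mean_reduction {X : Type*} [MeasurableSpace X] (μ : Measure X) (s : Set X) (g : X → ℝ)
    (c : ℝ) (hμ0 : μ s ≠ 0) (hμs : μ s ≠ ∞) (hg : IntegrableOn g s μ) :
    ∫⁻ x in s, ENNReal.ofReal |g x - (μ s).toReal⁻¹ * ∫ y in s, g y ∂μ| ∂μ ≤
      2 * ∫⁻ x in s, ENNReal.ofReal |g x - c| ∂μ := by
  set m := (μ s).toReal⁻¹ * ∫ y in s, g y ∂μ with hm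
  have htR : 0 < (μ s).toReal := ENNReal.toReal_pos hμ0 hμs
  have hconst : IntegrableOn (fun _ => c) s μ := integrableOn_const hμs
  have hsub : IntegrableOn (fun y => g y - c) s μ := hg.sub hconst
  have hcm : |c - m| ≤ (μ s).toReal⁻¹ * ∫ y in s, |g y - c| ∂μ := by
    have e1 : ∫ y in s, (c - g y) ∂μ = (μ s).toReal * c - ∫ y in s, g y ∂μ := by
      rw [integral_sub hconst hg, setIntegral_const, smul_eq_mul]; rfl
    have e2 : c - m = (μ s).toReal⁻¹ * ∫ y in s, (c - g y) ∂μ := by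
      rw [e1, hm]; field_simp
    rw [e2, abs_mul, abs_of_nonneg (by positivity : (0:ℝ) ≤ (μ s).toReal⁻¹)]
    gcongr
    calc |∫ y in s, (c - g y) ∂μ| ≤ ∫ y in s, |c - g y| ∂μ := by
          simpa [Real.norm_eq_abs] using
            norm_integral_le_integral_norm (fun y => c - g y) (μ := μ.restrict s)
    _ = ∫ y in s, |g y - c| ∂μ := by
        congr 1; funext y; rw [abs_sub_comm]
  have hL : ENNReal.ofReal (∫ y in s, |g y - c| ∂μ) = ∫⁻ y in s, ENNReal.ofReal |g y - c| ∂μ :=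
    ofReal_integral_eq_lintegral_ofReal hsub.abs
      (Filter.Eventually.of_forall fun y => abs_nonneg _)
  have hone : μ s * ENNReal.ofReal ((μ s).toReal⁻¹) = 1 := by
    calc μ s * ENNReal.ofReal ((μ s).toReal⁻¹)
        = ENNReal.ofReal ((μ s).toReal) * ENNReal.ofReal ((μ s).toReal⁻¹) := by
          rw [ENNReal.ofReal_toReal hμs]
      _ = ENNReal.ofReal ((μ s).toReal * (μ s).toReal⁻¹) :=
          (ENNReal.ofReal_mul ENNReal.toReal_nonneg).symm
      _ = 1 := by rw [mul_inv_cancel₀ htR.ne', ENNReal.ofReal_one]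
  calc ∫⁻ x in s, ENNReal.ofReal |g x - m| ∂μ
      ≤ ∫⁻ x in s, (ENNReal.ofReal |g x - c| + ENNReal.ofReal |c - m|) ∂μ := by
        apply lintegral_mono
        intro x
        refine le_trans (ENNReal.ofReal_le_ofReal ?_) (ENNReal.ofReal_add_le)
        calc |g x - m| = |(g x - c) + (c - m)| := by ring_nf
        _ ≤ |g x - c| + |c - m| := abs_add_le _ _
    _ = (∫⁻ x in s, ENNReal.ofReal |g x - c| ∂μ) + ENNReal.ofReal |c - m| * μ s := by
        rw [lintegral_add_right _ measurable_const, setLIntegral_const]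
    _ ≤ (∫⁻ x in s, ENNReal.ofReal |g x - c| ∂μ) + ∫⁻ x in s, ENNReal.ofReal |g x - c| ∂μ := by
        gcongr
        calc ENNReal.ofReal |c - m| * μ s
            ≤ (ENNReal.ofReal ((μ s).toReal⁻¹) *
                ENNReal.ofReal (∫ y in s, |g y - c| ∂μ)) * μ s := by
              gcongr
              rw [← ENNReal.ofReal_mul (by positivity)]
              exact ENNReal.ofReal_le_ofReal hcm
          _ = (μ s * ENNReal.ofReal ((μ s).toReal⁻¹)) *
                ENNReal.ofReal (∫ y in s, |g y - c| ∂μ) := by ring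
          _ = ∫⁻ x in s, ENNReal.ofReal |g x - c| ∂μ := by rw [hone, one_mul, hL]
    _ = 2 * ∫⁻ x in s, ENNReal.ofReal |g x - c| ∂μ := by ring


lemma abs_integral_le_lintegral {X : Type*} [MeasurableSpace X] (μ : Measure X) (h : X → ℝ) :
    ENNReal.ofReal |∫ x, h x ∂μ| ≤ ∫⁻ x, ENNReal.ofReal |h x| ∂μ := by
  have := enorm_integral_le_lintegral_enorm (μ := μ) h
  simpa [← Real.norm_eq_abs, ofReal_norm] using this

end Aux

set_option maxHeartbeats 2000000

/-- pointwise bound `M̄^♯ I_α f ≤ C ⟦μ⟧_β M_α f` on the support of `μ`. -/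
theorem sharpMaxC_rieszR_le_fracMax (n : ℕ) (α β : ℝ) (hα0 : 0 < α) (hαn : α < n)
    (hβ1 : (n : ℝ) - α < β) (hβn : β ≤ n) :
    ∃ C : ℝ, 0 < C ∧ ∀ μ : Measure (En n), growthConst n β μ < ∞ →
      ∀ f : En n → ℝ, LocallyIntegrable f volume →
        LocallyIntegrable (rieszR n α f) μ →
        ∀ x : En n, memSupport μ x →
          sharpMaxC n β μ (rieszR n α f) x ≤
            ENNReal.ofReal C * growthConst n β μ *
              fracMax n α (fun y => (‖f y‖₊ : ℝ≥0∞)) x := by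
  classical
  have hγ : α - (n:ℝ) < 0 := by linarith
  have hβγ : 0 < β + (α - (n:ℝ)) := by linarith
  have hβpos : 0 < β := by linarith
  have hnα : (0:ℝ) < (n:ℝ) - α := by linarith
  have hn1 : 1 ≤ n := by
    by_contra h
    push_neg at h
    interval_cases n <;> simp_all <;> linarith
  set CΔ : ℝ≥0∞ := ENNReal.ofReal (((n:ℝ) - α) * 2 ^ (1 - (α - (n:ℝ)))) * CT5 n α with hCΔ
  set Cfin : ℝ≥0∞ := 2 * (ENNReal.ofReal ((2:ℝ) ^ ((n:ℝ) - α)) * CK3 n α β + CΔ) with hCfin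
  have hCT5_ne : CT5 n α ≠ ∞ := by
    rw [CT5]; exact ENNReal.mul_ne_top ENNReal.ofReal_ne_top (by norm_num)
  have hCΔ_ne : CΔ ≠ ∞ := by
    rw [hCΔ]; exact ENNReal.mul_ne_top ENNReal.ofReal_ne_top hCT5_ne
  have hCfin_ne : Cfin ≠ ∞ := by
    rw [hCfin]
    exact ENNReal.mul_ne_top (by norm_num) (ENNReal.add_ne_top.2
      ⟨ENNReal.mul_ne_top ENNReal.ofReal_ne_top (CK3_ne_top hβγ), hCΔ_ne⟩)
  have hCΔ_pos : 0 < CΔ := by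
    rw [hCΔ, CT5]
    refine ENNReal.mul_pos ?_ ?_
    · exact (ENNReal.ofReal_pos.2 (mul_pos hnα (Real.rpow_pos_of_pos two_pos _))).ne'
    · refine (ENNReal.mul_pos ?_ (by norm_num)).ne'
      exact (ENNReal.ofReal_pos.2 (mul_pos (Real.rpow_pos_of_pos two_pos _)
        (Real.rpow_pos_of_pos (by norm_num) _))).ne'
  have hCfin_pos : Cfin ≠ 0 := by
    rw [hCfin]
    refine mul_ne_zero (by norm_num) ?_
    exact (lt_of_lt_of_le hCΔ_pos le_add_self).ne'
  refine ⟨Cfin.toReal + 1, by positivity, ?_⟩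
  intro μ hGfin f hfloc hrloc x₀ hx₀
  have hCle : Cfin ≤ ENNReal.ofReal (Cfin.toReal + 1) := by
    conv_lhs => rw [← ENNReal.ofReal_toReal hCfin_ne]
    exact ENNReal.ofReal_le_ofReal (by linarith [ENNReal.toReal_nonneg (a := Cfin)])
  suffices h : sharpMaxC n β μ (rieszR n α f) x₀ ≤
      Cfin * growthConst n β μ * fracMax n α (fun y => (‖f y‖₊ : ℝ≥0∞)) x₀ by
    exact le_trans h (mul_le_mul_left (mul_le_mul_left hCle _) _)
  set G := growthConst n β μ with hGdef
  set F : En n → ℝ≥0∞ := fun y => (‖f y‖₊ : ℝ≥0∞) with hFdef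
  set M := fracMax n α F x₀ with hMdef
  have hG_ne : G ≠ ∞ := hGfin.ne
  have hG0 : G ≠ 0 := by
    have h2 : ENNReal.ofReal ((1:ℝ) ^ (-β)) * μ (ball x₀ 1) ≤ G := by
      refine le_trans ?_ (le_iSup _ x₀)
      refine le_trans ?_ (le_iSup _ hx₀)
      refine le_trans ?_ (le_iSup _ (1:ℝ))
      exact le_iSup_of_le one_pos le_rfl
    have h3 : (0:ℝ≥0∞) < μ (ball x₀ 1) := hx₀ 1 one_pos
    rw [Real.one_rpow, ENNReal.ofReal_one, one_mul] at h2
    exact (lt_of_lt_of_le h3 h2).ne'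
  by_cases hMtop : M = ∞
  · rw [hMtop, ENNReal.mul_top (mul_ne_zero hCfin_pos hG0)]
    exact le_top
  simp only [sharpMaxC]
  apply iSup_le; intro r; apply iSup_le; intro hr
  have hr2 : (0:ℝ) < 2*r := by linarith
  set B := ball x₀ r with hB
  set B₂ := ball x₀ (2*r) with hB₂
  have hμB_le : μ B ≤ G * ENNReal.ofReal (r ^ β) := ball_bound_support hx₀ hr
  have hμB_ne : μ B ≠ ∞ := by
    intro h
    rw [h] at hμB_le
    exact (ENNReal.mul_ne_top hG_ne ENNReal.ofReal_ne_top) (top_le_iff.1 hμB_le)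
  have hμB_0 : μ B ≠ 0 := (hx₀ r hr).ne'
  have hFae : AEMeasurable F volume := hfloc.aestronglyMeasurable.enorm
  set F' : En n → ℝ≥0∞ := hFae.mk F with hF'def
  have hF'm : Measurable F' := hFae.measurable_mk
  have hFF' : F =ᵐ[volume] F' := hFae.ae_eq_mk
  have hMF' : fracMax n α F' x₀ = M := by
    rw [hMdef]
    refine iSup_congr fun ρ => iSup_congr fun hρ => ?_
    congr 1
    exact lintegral_congr_ae (ae_restrict_of_ae (hFF'.symm.mono fun y hy => hy))
  set K : En n → En n → ℝ≥0∞ :=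
    fun x y => ENNReal.ofReal (‖x - y‖ ^ (α - (n:ℝ))) with hKdef
  have hKm : Measurable fun p : En n × En n => K p.1 p.2 := by
    have h1 : Measurable fun p : En n × En n => ‖p.1 - p.2‖ :=
      (continuous_fst.sub continuous_snd).norm.measurable
    exact (h1.pow measurable_const).ennreal_ofReal
  have hKym : ∀ y, Measurable fun x => K x y := by
    intro y
    have h1 : Measurable fun x : En n => ‖x - y‖ :=
      (continuous_id.sub continuous_const).norm.measurable
    exact (h1.pow measurable_const).ennreal_ofReal
  have henorm : ∀ x y, (‖(‖x - y‖ ^ (α-(n:ℝ))) * f y‖₊ : ℝ≥0∞) = K x y * F y := by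
    intro x y
    rw [nnnorm_mul, ENNReal.coe_mul, ← enorm_eq_nnnorm (‖x - y‖ ^ (α-(n:ℝ))), ← ofReal_norm (‖x - y‖ ^ (α-(n:ℝ))),
      Real.norm_eq_abs, abs_of_nonneg (Real.rpow_nonneg (norm_nonneg _) _)]
  have habsK : ∀ x y, ENNReal.ofReal |‖x - y‖ ^ (α-(n:ℝ)) * f y| = K x y * F y := by
    intro x y
    rw [abs_mul, abs_of_nonneg (Real.rpow_nonneg (norm_nonneg _) _),
      ENNReal.ofReal_mul (Real.rpow_nonneg (norm_nonneg _) _)]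
    congr 1
    rw [← Real.norm_eq_abs]; exact ofReal_norm _
  have hcongrW : ∀ (W : En n → ℝ≥0∞) (s : Set (En n)),
      ∫⁻ y in s, W y * F y ∂volume = ∫⁻ y in s, W y * F' y ∂volume := by
    intro W s
    exact lintegral_congr_ae (ae_restrict_of_ae
      (Filter.EventuallyEq.mul (Filter.EventuallyEq.refl _ W) hFF'))
  have hdcomp : ∀ y : En n, y ∈ B₂ᶜ → 2*r ≤ ‖x₀ - y‖ := by
    intro y hy
    have : ¬ dist y x₀ < 2 * r := fun h => hy (mem_ball.2 h)
    rw [dist_comm, dist_eq_norm] at this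
    linarith [not_lt.1 this]
  set Φ₁ : En n → ℝ≥0∞ := fun x => ∫⁻ y in B₂, K x y * F' y ∂volume with hΦ₁def
  by_cases hcase : (∫⁻ y in B₂ᶜ, K x₀ y * F' y ∂volume) = ∞
  · -- divergent tail: rieszR n α f vanishes identically
    have hgzero : ∀ x, rieszR n α f x = 0 := by
      intro x
      apply integral_undef
      intro hint
      have hfin' : ∫⁻ y, (‖(‖x - y‖ ^ (α-(n:ℝ))) * f y‖₊ : ℝ≥0∞) ∂volume < ⊤ := hint.2
      set t : ℝ := 1 + ‖x - x₀‖ / (2*r) with ht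
      have htpos : (0:ℝ) < t := by positivity
      have hptwise : ∀ᵐ y ∂(volume.restrict B₂ᶜ),
          ENNReal.ofReal (t ^ (α-(n:ℝ))) * (K x₀ y * F' y) ≤ K x y * F' y := by
        have hne : ∀ᵐ y : En n ∂volume, y ≠ x := by
          have h0 : volume ({x} : Set (En n)) = 0 := by
            obtain ⟨m, rfl⟩ : ∃ m, n = m + 1 := ⟨n - 1, by omega⟩
            exact measure_singleton x
          rw [ae_iff]
          simpa using h0
        filter_upwards [ae_restrict_of_ae hne,
          ae_restrict_mem measurableSet_ball.compl] with y hyx hyB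
        have hd : 2*r ≤ ‖x₀ - y‖ := hdcomp y hyB
        have hxy_pos : (0:ℝ) < ‖x - y‖ := by
          rw [norm_pos_iff]; exact sub_ne_zero.2 (Ne.symm hyx)
        have htri : ‖x - y‖ ≤ ‖x - x₀‖ + ‖x₀ - y‖ := norm_sub_le_norm_sub_add_norm_sub x x₀ y
        have h5 : ‖x - x₀‖ / (2*r) * (2*r) ≤ ‖x - x₀‖ / (2*r) * ‖x₀ - y‖ :=
          mul_le_mul_of_nonneg_left hd (by positivity)
        have h6 : ‖x - x₀‖ / (2*r) * (2*r) = ‖x - x₀‖ := div_mul_cancel₀ _ (ne_of_gt hr2)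
        have hle : ‖x - y‖ ≤ t * ‖x₀ - y‖ := by
          rw [ht]
          have : (1 + ‖x - x₀‖ / (2*r)) * ‖x₀ - y‖ =
              ‖x₀ - y‖ + ‖x - x₀‖ / (2*r) * ‖x₀ - y‖ := by ring
          rw [this]
          linarith
        have hlow : (t * ‖x₀ - y‖) ^ (α-(n:ℝ)) ≤ ‖x - y‖ ^ (α-(n:ℝ)) :=
          Real.rpow_le_rpow_of_nonpos hxy_pos hle hγ.le
        have hsplit : (t * ‖x₀ - y‖) ^ (α-(n:ℝ)) =
            t ^ (α-(n:ℝ)) * ‖x₀ - y‖ ^ (α-(n:ℝ)) :=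
          Real.mul_rpow htpos.le (norm_nonneg _)
        calc ENNReal.ofReal (t ^ (α-(n:ℝ))) * (K x₀ y * F' y)
            = ENNReal.ofReal (t ^ (α-(n:ℝ)) * ‖x₀ - y‖ ^ (α-(n:ℝ))) * F' y := by
              rw [ENNReal.ofReal_mul (Real.rpow_nonneg htpos.le _)]; ring
          _ ≤ K x y * F' y := by
              apply mul_le_mul_left
              apply ENNReal.ofReal_le_ofReal
              rw [← hsplit]; exact hlow
      have h2 : ENNReal.ofReal (t ^ (α-(n:ℝ))) * ∫⁻ y in B₂ᶜ, K x₀ y * F' y ∂volume ≤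
          ∫⁻ y in B₂ᶜ, K x y * F' y ∂volume := by
        rw [← lintegral_const_mul' _ _ ENNReal.ofReal_ne_top]
        exact lintegral_mono_ae hptwise
      rw [hcase, ENNReal.mul_top
        (ENNReal.ofReal_pos.2 (Real.rpow_pos_of_pos htpos _)).ne'] at h2
      have h3 : (∫⁻ y in B₂ᶜ, K x y * F' y ∂volume) = ∞ := top_le_iff.1 h2
      have h4 : ∫⁻ y, K x y * F y ∂volume = ∞ := by
        refine top_le_iff.1 ?_
        calc (⊤:ℝ≥0∞) = ∫⁻ y in B₂ᶜ, K x y * F' y ∂volume := h3.symm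
        _ = ∫⁻ y in B₂ᶜ, K x y * F y ∂volume := (hcongrW (K x) B₂ᶜ).symm
        _ ≤ ∫⁻ y, K x y * F y ∂volume := setLIntegral_le_lintegral _ _
      have h5 : ∫⁻ y, (‖(‖x - y‖ ^ (α-(n:ℝ))) * f y‖₊ : ℝ≥0∞) ∂volume = ∞ := by
        rw [lintegral_congr fun y => henorm x y]
        exact h4
      rw [h5] at hfin'
      exact absurd rfl hfin'.ne
    have h0 : ∫⁻ x in B, ENNReal.ofReal |rieszR n α f x -
        (μ B).toReal⁻¹ * ∫ y in B, rieszR n α f y ∂μ| ∂μ = 0 := by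
      have hz : ∀ x : En n, ENNReal.ofReal |rieszR n α f x -
          (μ B).toReal⁻¹ * ∫ y in B, rieszR n α f y ∂μ| = 0 := by
        intro x
        simp [hgzero]
      calc ∫⁻ x in B, ENNReal.ofReal |rieszR n α f x -
            (μ B).toReal⁻¹ * ∫ y in B, rieszR n α f y ∂μ| ∂μ
          = ∫⁻ _ in B, (0:ℝ≥0∞) ∂μ := lintegral_congr hz
        _ = 0 := lintegral_zero
    rw [h0, mul_zero]
    exact zero_le
  · -- convergent tail
    set c : ℝ := ∫ y in B₂ᶜ, ‖x₀ - y‖ ^ (α-(n:ℝ)) * f y ∂volume with hc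
    have hkfm : ∀ x : En n,
        AEStronglyMeasurable (fun y => ‖x - y‖ ^ (α-(n:ℝ)) * f y) volume := by
      intro x
      exact ((((continuous_const.sub continuous_id).norm.measurable.pow
        measurable_const).aestronglyMeasurable)).mul hfloc.aestronglyMeasurable
    have htail_int : ∀ x : En n, (∫⁻ y in B₂ᶜ, K x y * F' y ∂volume) ≠ ∞ →
        IntegrableOn (fun y => ‖x - y‖ ^ (α-(n:ℝ)) * f y) B₂ᶜ volume := by
      intro x hx
      refine ⟨(hkfm x).restrict, ?_⟩
      show ∫⁻ y in B₂ᶜ, (‖(‖x - y‖ ^ (α-(n:ℝ))) * f y‖₊ : ℝ≥0∞) ∂volume < ⊤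
      calc ∫⁻ y in B₂ᶜ, (‖(‖x - y‖ ^ (α-(n:ℝ))) * f y‖₊ : ℝ≥0∞) ∂volume
          = ∫⁻ y in B₂ᶜ, K x y * F y ∂volume := lintegral_congr fun y => henorm x y
        _ = ∫⁻ y in B₂ᶜ, K x y * F' y ∂volume := hcongrW (K x) B₂ᶜ
        _ < ⊤ := hx.lt_top
    have hB2c_bound : ∀ x ∈ B, (∫⁻ y in B₂ᶜ, K x y * F' y ∂volume) ≤
        ENNReal.ofReal ((2:ℝ) ^ ((n:ℝ) - α)) * ∫⁻ y in B₂ᶜ, K x₀ y * F' y ∂volume := by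
      intro x hxB
      rw [← lintegral_const_mul' _ _ ENNReal.ofReal_ne_top]
      refine setLIntegral_mono' measurableSet_ball.compl ?_
      intro y hy
      have hd : 2*r ≤ ‖x₀ - y‖ := hdcomp y hy
      have hxx₀ : ‖x - x₀‖ < r := by rw [← dist_eq_norm]; exact mem_ball.1 hxB
      have hhalf := half_bound hxx₀ hd
      have hpos2 : (0:ℝ) < ‖x₀ - y‖/2 := by linarith
      have h1 : ‖x - y‖ ^ (α-(n:ℝ)) ≤ (‖x₀ - y‖/2) ^ (α-(n:ℝ)) :=
        Real.rpow_le_rpow_of_nonpos hpos2 hhalf hγ.le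
      have h2 : (‖x₀ - y‖/2) ^ (α-(n:ℝ)) = 2 ^ ((n:ℝ)-α) * ‖x₀ - y‖ ^ (α-(n:ℝ)) := by
        rw [Real.div_rpow (norm_nonneg _) (by norm_num : (0:ℝ) ≤ 2), div_eq_mul_inv,
          ← Real.rpow_neg (by norm_num : (0:ℝ) ≤ 2),
          show -(α-(n:ℝ)) = (n:ℝ)-α by ring]
        ring
      calc K x y * F' y
          ≤ ENNReal.ofReal (2 ^ ((n:ℝ)-α) * ‖x₀ - y‖ ^ (α-(n:ℝ))) * F' y := by
            apply mul_le_mul_left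
            apply ENNReal.ofReal_le_ofReal
            rw [← h2]; exact h1
        _ = ENNReal.ofReal ((2:ℝ) ^ ((n:ℝ)-α)) * (K x₀ y * F' y) := by
            rw [ENNReal.ofReal_mul (Real.rpow_nonneg (by norm_num) _)]; ring
    haveI : IsFiniteMeasure (μ.restrict B) :=
      ⟨by rw [Measure.restrict_apply_univ]; exact hμB_ne.lt_top⟩
    have hunc : Measurable fun p : En n × En n => K p.1 p.2 * F' p.2 :=
      hKm.mul (hF'm.comp measurable_snd)
    have hswap : ∫⁻ x in B, Φ₁ x ∂μ =
        ∫⁻ y in B₂, (∫⁻ x in B, K x y ∂μ) * F' y ∂volume := by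
      simp only [hΦ₁def]
      rw [lintegral_lintegral_swap hunc.aemeasurable]
      exact lintegral_congr fun y => lintegral_mul_const _ (hKym y)
    have hTermI : ∫⁻ x in B, Φ₁ x ∂μ ≤
        CK3 n α β * G * ENNReal.ofReal (r ^ (β + (α-(n:ℝ)))) *
          (M * ENNReal.ofReal ((2*r) ^ ((n:ℝ) - α))) := by
      rw [hswap]
      calc ∫⁻ y in B₂, (∫⁻ x in B, K x y ∂μ) * F' y ∂volume
          ≤ ∫⁻ y in B₂, (CK3 n α β * G * ENNReal.ofReal (r ^ (β + (α-(n:ℝ))))) * F' y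
              ∂volume := by
            refine setLIntegral_mono' measurableSet_ball ?_
            intro y hy
            exact mul_le_mul_left (kernel_mu_integral hγ hβγ hβpos hr y hy) _
        _ = (CK3 n α β * G * ENNReal.ofReal (r ^ (β + (α-(n:ℝ))))) *
              ∫⁻ y in B₂, F' y ∂volume :=
            lintegral_const_mul' _ _ (ENNReal.mul_ne_top
              (ENNReal.mul_ne_top (CK3_ne_top hβγ) hG_ne) ENNReal.ofReal_ne_top)
        _ ≤ _ := by
            gcongr
            calc ∫⁻ y in B₂, F' y ∂volume = ∫⁻ y in B₂, F y ∂volume :=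
                  lintegral_congr_ae (ae_restrict_of_ae (hFF'.symm.mono fun y hy => hy))
              _ ≤ M * ENNReal.ofReal ((2*r) ^ ((n:ℝ) - α)) := by
                  rw [hMdef]; exact fracMax_ball_bound F x₀ hr2
    have hΦ₁meas : Measurable Φ₁ := by
      simp only [hΦ₁def]
      exact Measurable.lintegral_prod_right' hunc
    have hTermI_ne : (∫⁻ x in B, Φ₁ x ∂μ) ≠ ∞ := by
      refine ne_top_of_le_ne_top ?_ hTermI
      exact ENNReal.mul_ne_top (ENNReal.mul_ne_top
        (ENNReal.mul_ne_top (CK3_ne_top hβγ) hG_ne) ENNReal.ofReal_ne_top)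
        (ENNReal.mul_ne_top hMtop ENNReal.ofReal_ne_top)
    have hΦ₁ae : ∀ᵐ x ∂(μ.restrict B), Φ₁ x < ∞ := ae_lt_top hΦ₁meas hTermI_ne
    have hc₁ : (0:ℝ) ≤ ((n:ℝ)-α) * 2 ^ (1-(α-(n:ℝ))) :=
      le_of_lt (mul_pos hnα (Real.rpow_pos_of_pos two_pos _))
    have hΔ : ∀ x ∈ B, ∫⁻ y in B₂ᶜ,
        ENNReal.ofReal |‖x - y‖ ^ (α-(n:ℝ)) - ‖x₀ - y‖ ^ (α-(n:ℝ))| * F' y ∂volume ≤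
          CΔ * M := by
      intro x hxB
      have hxx₀ : ‖x - x₀‖ < r := by rw [← dist_eq_norm]; exact mem_ball.1 hxB
      have hpt : ∀ y ∈ B₂ᶜ,
          ENNReal.ofReal |‖x - y‖ ^ (α-(n:ℝ)) - ‖x₀ - y‖ ^ (α-(n:ℝ))| * F' y ≤
          ENNReal.ofReal (((n:ℝ)-α) * 2 ^ (1-(α-(n:ℝ))) * r) *
            (ENNReal.ofReal (‖x₀ - y‖ ^ (α-(n:ℝ)-1)) * F' y) := by
        intro y hy
        have hd : 2*r ≤ ‖x₀ - y‖ := hdcomp y hy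
        have hhalf := half_bound hxx₀ hd
        have hpos2 : (0:ℝ) < ‖x₀ - y‖/2 := by linarith
        have hb2 : ‖x₀ - y‖/2 ≤ ‖x₀ - y‖ := by linarith
        have hkd := kernel_diff hγ hpos2 hhalf hb2
        have habr : |‖x - y‖ - ‖x₀ - y‖| ≤ r := by
          have h1 : |‖x - y‖ - ‖x₀ - y‖| ≤ ‖(x - y) - (x₀ - y)‖ := abs_norm_sub_norm_le _ _
          have h2 : (x - y) - (x₀ - y) = x - x₀ := by abel
          rw [h2] at h1; linarith
        have hm2 : (‖x₀ - y‖/2) ^ (α-(n:ℝ)-1) =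
            2 ^ (1-(α-(n:ℝ))) * ‖x₀ - y‖ ^ (α-(n:ℝ)-1) := by
          rw [Real.div_rpow (norm_nonneg _) (by norm_num : (0:ℝ) ≤ 2), div_eq_mul_inv,
            ← Real.rpow_neg (by norm_num : (0:ℝ) ≤ 2),
            show -(α-(n:ℝ)-1) = 1-(α-(n:ℝ)) by ring]
          ring
        have hreal : |‖x - y‖ ^ (α-(n:ℝ)) - ‖x₀ - y‖ ^ (α-(n:ℝ))| ≤
            ((n:ℝ)-α) * 2 ^ (1-(α-(n:ℝ))) * r * ‖x₀ - y‖ ^ (α-(n:ℝ)-1) := by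
          rw [hm2] at hkd
          have hnn : (0:ℝ) ≤ (-(α-(n:ℝ))) * (2 ^ (1-(α-(n:ℝ))) *
              ‖x₀ - y‖ ^ (α-(n:ℝ)-1)) :=
            mul_nonneg (by linarith) (mul_nonneg (Real.rpow_nonneg (by norm_num) _)
              (Real.rpow_nonneg (norm_nonneg _) _))
          calc |‖x - y‖ ^ (α-(n:ℝ)) - ‖x₀ - y‖ ^ (α-(n:ℝ))|
              ≤ (-(α-(n:ℝ))) * (2 ^ (1-(α-(n:ℝ))) * ‖x₀ - y‖ ^ (α-(n:ℝ)-1)) *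
                |‖x - y‖ - ‖x₀ - y‖| := hkd
            _ ≤ (-(α-(n:ℝ))) * (2 ^ (1-(α-(n:ℝ))) * ‖x₀ - y‖ ^ (α-(n:ℝ)-1)) * r :=
                mul_le_mul_of_nonneg_left habr hnn
            _ = ((n:ℝ)-α) * 2 ^ (1-(α-(n:ℝ))) * r * ‖x₀ - y‖ ^ (α-(n:ℝ)-1) := by ring
        calc ENNReal.ofReal |‖x - y‖ ^ (α-(n:ℝ)) - ‖x₀ - y‖ ^ (α-(n:ℝ))| * F' y
            ≤ ENNReal.ofReal (((n:ℝ)-α) * 2 ^ (1-(α-(n:ℝ))) * r *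
                ‖x₀ - y‖ ^ (α-(n:ℝ)-1)) * F' y :=
              mul_le_mul_left (ENNReal.ofReal_le_ofReal hreal) _
          _ = ENNReal.ofReal (((n:ℝ)-α) * 2 ^ (1-(α-(n:ℝ))) * r) *
                (ENNReal.ofReal (‖x₀ - y‖ ^ (α-(n:ℝ)-1)) * F' y) := by
              rw [ENNReal.ofReal_mul (by positivity)]
              ring
      calc ∫⁻ y in B₂ᶜ,
            ENNReal.ofReal |‖x - y‖ ^ (α-(n:ℝ)) - ‖x₀ - y‖ ^ (α-(n:ℝ))| * F' y ∂volume
          ≤ ∫⁻ y in B₂ᶜ, ENNReal.ofReal (((n:ℝ)-α) * 2 ^ (1-(α-(n:ℝ))) * r) *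
              (ENNReal.ofReal (‖x₀ - y‖ ^ (α-(n:ℝ)-1)) * F' y) ∂volume :=
            setLIntegral_mono' measurableSet_ball.compl hpt
        _ = ENNReal.ofReal (((n:ℝ)-α) * 2 ^ (1-(α-(n:ℝ))) * r) *
              ∫⁻ y in B₂ᶜ, ENNReal.ofReal (‖x₀ - y‖ ^ (α-(n:ℝ)-1)) * F' y ∂volume :=
            lintegral_const_mul' _ _ ENNReal.ofReal_ne_top
        _ ≤ ENNReal.ofReal (((n:ℝ)-α) * 2 ^ (1-(α-(n:ℝ))) * r) *
              (CT5 n α * fracMax n α F' x₀ * ENNReal.ofReal (r ^ (-1:ℝ))) := by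
            gcongr
            exact tail_sum hγ hr F'
        _ = CΔ * M := by
            rw [hMF', hCΔ]
            have hr1 : ENNReal.ofReal r * ENNReal.ofReal (r ^ (-1:ℝ)) = 1 := by
              rw [← ENNReal.ofReal_mul hr.le, Real.rpow_neg_one,
                mul_inv_cancel₀ hr.ne', ENNReal.ofReal_one]
            rw [ENNReal.ofReal_mul hc₁]
            calc (ENNReal.ofReal (((n:ℝ)-α) * 2 ^ (1-(α-(n:ℝ)))) * ENNReal.ofReal r) *
                (CT5 n α * M * ENNReal.ofReal (r ^ (-1:ℝ)))
                = (ENNReal.ofReal (((n:ℝ)-α) * 2 ^ (1-(α-(n:ℝ)))) * CT5 n α * M) *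
                  (ENNReal.ofReal r * ENNReal.ofReal (r ^ (-1:ℝ))) := by ring
              _ = ENNReal.ofReal (((n:ℝ)-α) * 2 ^ (1-(α-(n:ℝ)))) * CT5 n α * M := by
                  rw [hr1, mul_one]
    have hgsplit : ∀ᵐ x ∂(μ.restrict B),
        ENNReal.ofReal |rieszR n α f x - c| ≤ Φ₁ x + CΔ * M := by
      filter_upwards [hΦ₁ae, ae_restrict_mem measurableSet_ball] with x hΦx hxB
      have hint1 : IntegrableOn (fun y => ‖x - y‖ ^ (α-(n:ℝ)) * f y) B₂ volume := by
        refine ⟨(hkfm x).restrict, ?_⟩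
        show ∫⁻ y in B₂, (‖(‖x - y‖ ^ (α-(n:ℝ))) * f y‖₊ : ℝ≥0∞) ∂volume < ⊤
        calc ∫⁻ y in B₂, (‖(‖x - y‖ ^ (α-(n:ℝ))) * f y‖₊ : ℝ≥0∞) ∂volume
            = ∫⁻ y in B₂, K x y * F y ∂volume := lintegral_congr fun y => henorm x y
          _ = ∫⁻ y in B₂, K x y * F' y ∂volume := hcongrW (K x) B₂
          _ < ⊤ := hΦx
      have hx_tail_ne : (∫⁻ y in B₂ᶜ, K x y * F' y ∂volume) ≠ ∞ := by
        refine ne_top_of_le_ne_top ?_ (hB2c_bound x hxB)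
        exact ENNReal.mul_ne_top ENNReal.ofReal_ne_top hcase
      have hint2 := htail_int x hx_tail_ne
      have hint2₀ := htail_int x₀ hcase
      have hinttot : Integrable (fun y => ‖x - y‖ ^ (α-(n:ℝ)) * f y) volume := by
        have := hint1.union hint2
        rwa [union_compl_self, integrableOn_univ] at this
      have hsplit : rieszR n α f x = (∫ y in B₂, ‖x - y‖ ^ (α-(n:ℝ)) * f y ∂volume) +
          ∫ y in B₂ᶜ, ‖x - y‖ ^ (α-(n:ℝ)) * f y ∂volume :=
        (integral_add_compl measurableSet_ball hinttot).symm
      have hdiff : (∫ y in B₂ᶜ, ‖x - y‖ ^ (α-(n:ℝ)) * f y ∂volume) - c =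
          ∫ y in B₂ᶜ, (‖x - y‖ ^ (α-(n:ℝ)) - ‖x₀ - y‖ ^ (α-(n:ℝ))) * f y ∂volume := by
        rw [hc, ← integral_sub hint2 hint2₀]
        congr 1; funext y; ring
      have h1 : ENNReal.ofReal |∫ y in B₂, ‖x - y‖ ^ (α-(n:ℝ)) * f y ∂volume| ≤ Φ₁ x := by
        calc ENNReal.ofReal |∫ y in B₂, ‖x - y‖ ^ (α-(n:ℝ)) * f y ∂volume|
            ≤ ∫⁻ y in B₂, ENNReal.ofReal |‖x - y‖ ^ (α-(n:ℝ)) * f y| ∂volume :=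
              abs_integral_le_lintegral (volume.restrict B₂)
                (fun y => ‖x - y‖ ^ (α-(n:ℝ)) * f y)
          _ = ∫⁻ y in B₂, K x y * F y ∂volume := lintegral_congr fun y => habsK x y
          _ = Φ₁ x := hcongrW (K x) B₂
      have h2 : ENNReal.ofReal
          |∫ y in B₂ᶜ, (‖x - y‖ ^ (α-(n:ℝ)) - ‖x₀ - y‖ ^ (α-(n:ℝ))) * f y ∂volume| ≤
          CΔ * M := by
        refine le_trans (abs_integral_le_lintegral (volume.restrict B₂ᶜ)
          (fun y => (‖x - y‖ ^ (α-(n:ℝ)) - ‖x₀ - y‖ ^ (α-(n:ℝ))) * f y)) ?_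
        calc ∫⁻ y in B₂ᶜ, ENNReal.ofReal
                |(‖x - y‖ ^ (α-(n:ℝ)) - ‖x₀ - y‖ ^ (α-(n:ℝ))) * f y| ∂volume
            = ∫⁻ y in B₂ᶜ, ENNReal.ofReal
                |‖x - y‖ ^ (α-(n:ℝ)) - ‖x₀ - y‖ ^ (α-(n:ℝ))| * F y ∂volume := by
              refine lintegral_congr fun y => ?_
              rw [abs_mul, ENNReal.ofReal_mul (abs_nonneg _)]
              congr 1
              rw [← Real.norm_eq_abs]; exact ofReal_norm _
          _ = ∫⁻ y in B₂ᶜ, ENNReal.ofReal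
                |‖x - y‖ ^ (α-(n:ℝ)) - ‖x₀ - y‖ ^ (α-(n:ℝ))| * F' y ∂volume :=
              hcongrW _ B₂ᶜ
          _ ≤ CΔ * M := hΔ x hxB
      calc ENNReal.ofReal |rieszR n α f x - c|
          = ENNReal.ofReal |(∫ y in B₂, ‖x - y‖ ^ (α-(n:ℝ)) * f y ∂volume) +
              ∫ y in B₂ᶜ, (‖x - y‖ ^ (α-(n:ℝ)) - ‖x₀ - y‖ ^ (α-(n:ℝ))) * f y ∂volume| := by
            rw [hsplit, ← hdiff]
            congr 1
            ring
        _ ≤ ENNReal.ofReal |∫ y in B₂, ‖x - y‖ ^ (α-(n:ℝ)) * f y ∂volume| +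
              ENNReal.ofReal |∫ y in B₂ᶜ,
                (‖x - y‖ ^ (α-(n:ℝ)) - ‖x₀ - y‖ ^ (α-(n:ℝ))) * f y ∂volume| :=
            le_trans (ENNReal.ofReal_le_ofReal (abs_add_le _ _)) ENNReal.ofReal_add_le
        _ ≤ Φ₁ x + CΔ * M := add_le_add h1 h2
    have hgB : IntegrableOn (rieszR n α f) B μ :=
      (hrloc.integrableOn_isCompact (isCompact_closedBall x₀ r)).mono_set
        ball_subset_closedBall
    have hmean := mean_reduction μ B (rieszR n α f) c hμB_0 hμB_ne hgB
    have hP1 : ENNReal.ofReal (r ^ (-β)) * ENNReal.ofReal (r ^ (β + (α-(n:ℝ)))) *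
        ENNReal.ofReal (r ^ ((n:ℝ)-α)) = 1 := by
      rw [← ENNReal.ofReal_mul (Real.rpow_nonneg hr.le _), ← Real.rpow_add hr,
        ← ENNReal.ofReal_mul (Real.rpow_nonneg hr.le _), ← Real.rpow_add hr,
        show -β + (β + (α-(n:ℝ))) + ((n:ℝ)-α) = 0 by ring, Real.rpow_zero,
        ENNReal.ofReal_one]
    have hP2 : ENNReal.ofReal (r ^ (-β)) * ENNReal.ofReal (r ^ β) = 1 := by
      rw [← ENNReal.ofReal_mul (Real.rpow_nonneg hr.le _), ← Real.rpow_add hr,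
        show -β + β = 0 by ring, Real.rpow_zero, ENNReal.ofReal_one]
    have h2r : ENNReal.ofReal ((2*r) ^ ((n:ℝ)-α)) =
        ENNReal.ofReal ((2:ℝ) ^ ((n:ℝ)-α)) * ENNReal.ofReal (r ^ ((n:ℝ)-α)) := by
      rw [Real.mul_rpow (by norm_num : (0:ℝ) ≤ 2) hr.le,
        ENNReal.ofReal_mul (Real.rpow_nonneg (by norm_num) _)]
    calc ENNReal.ofReal (r ^ (-β)) * ∫⁻ x in B, ENNReal.ofReal |rieszR n α f x -
          (μ B).toReal⁻¹ * ∫ y in B, rieszR n α f y ∂μ| ∂μ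
        ≤ ENNReal.ofReal (r ^ (-β)) *
            (2 * ∫⁻ x in B, ENNReal.ofReal |rieszR n α f x - c| ∂μ) :=
          mul_le_mul_right hmean _
      _ ≤ ENNReal.ofReal (r ^ (-β)) * (2 * ∫⁻ x in B, (Φ₁ x + CΔ * M) ∂μ) :=
          mul_le_mul_right (mul_le_mul_right (lintegral_mono_ae hgsplit) 2) _
      _ = ENNReal.ofReal (r ^ (-β)) *
            (2 * ((∫⁻ x in B, Φ₁ x ∂μ) + (CΔ * M) * μ B)) := by
          rw [lintegral_add_right _ measurable_const, setLIntegral_const]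
      _ ≤ ENNReal.ofReal (r ^ (-β)) * (2 *
            ((CK3 n α β * G * ENNReal.ofReal (r ^ (β + (α-(n:ℝ)))) *
              (M * ENNReal.ofReal ((2*r) ^ ((n:ℝ) - α)))) +
             (CΔ * M) * (G * ENNReal.ofReal (r ^ β)))) := by
          gcongr
      _ = 2 * ENNReal.ofReal ((2:ℝ) ^ ((n:ℝ)-α)) * CK3 n α β * G * M *
            (ENNReal.ofReal (r ^ (-β)) * ENNReal.ofReal (r ^ (β + (α-(n:ℝ)))) *
              ENNReal.ofReal (r ^ ((n:ℝ)-α))) +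
          2 * CΔ * M * G * (ENNReal.ofReal (r ^ (-β)) * ENNReal.ofReal (r ^ β)) := by
          rw [h2r]; ring
      _ = Cfin * G * M := by
          rw [hP1, hP2, mul_one, mul_one, hCfin]; ring
end
end
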